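/- arXiv:2008.01375 — 6 statements merged into one kernel-verified Lean document; each statement's English description precedes it below -/
import Mathlib

section
/- Let d ≥ 1, let y ~ N(0, I_d) be a standard Gaussian vector in ℝ^d, let v ∈ ℝ^d and r ≥ ‖v‖₂. Then P(‖y‖₂ ≤ r − ‖v‖₂) ≤ P(‖y + v‖₂ ≤ r) ≤ P(‖y‖₂ ≤ r); that is, the standard Gaussian measure of the Euclidean ball of radius r centered at −v is at most that of the ball of radius r centered at the origin, and at least that of the ball of radius r − ‖v‖₂ centered at the origin. -/
open MeasureTheory ProbabilityTheory Real

/-- The Gaussian measure `N(μ, τ² I_d)` on `EuclideanSpace ℝ (Fin d)`, given as the product of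
`d` one-dimensional Gaussian measures with means `μ k` and common variance `τ²`. -/
noncomputable def gaussianPi (d : ℕ) (μ : EuclideanSpace ℝ (Fin d)) (τ : ℝ) :
    Measure (EuclideanSpace ℝ (Fin d)) :=
  (Measure.pi fun i => gaussianReal (μ i) (Real.toNNReal (τ ^ 2))).map
    (MeasurableEquiv.toLp 2 (Fin d → ℝ))

section Aux

lemma phi_shift_integral_le (a t : ℝ) (ha : 0 ≤ a) (ht : 0 ≤ t) :
    ∫ x in (t - a)..(t + a), gaussianPDFReal 0 1 x ≤ ∫ x in (-a)..a, gaussianPDFReal 0 1 x := by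
  set φ := gaussianPDFReal 0 1 with hφ
  have hcont : Continuous φ := by
    rw [hφ, gaussianPDFReal_def]
    continuity
  have hint : ∀ u w : ℝ, IntervalIntegrable φ volume u w := fun u w => hcont.intervalIntegrable u w
  have heven : ∀ x, φ (-x) = φ x := by
    intro x; simp [hφ, gaussianPDFReal, neg_sq]
  -- key : ∫ a..(t+a) ≤ ∫ (-a)..(t-a)
  have key : (∫ x in a..(t + a), φ x) ≤ ∫ x in (-a)..(t - a), φ x := by
    have h1 : (∫ x in (a - t)..a, φ (2 * a - x)) = ∫ x in a..(t + a), φ x := by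
      rw [intervalIntegral.integral_comp_sub_left φ (2 * a)]
      ring_nf
    have h2 : (∫ x in (-a)..(t - a), φ x) = ∫ x in (a - t)..a, φ (-x) := by
      rw [intervalIntegral.integral_comp_neg φ]
      norm_num
    have h3 : (∫ x in (a - t)..a, φ (-x)) = ∫ x in (a - t)..a, φ x := by
      simp_rw [heven]
    have h4 : (∫ x in (a - t)..a, φ (2 * a - x)) ≤ ∫ x in (a - t)..a, φ x := by
      apply intervalIntegral.integral_mono_on (by linarith)
        ((hcont.comp (by continuity)).intervalIntegrable _ _) (hint _ _)
      intro x hx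
      have hx1 : x ≤ a := hx.2
      show φ (2 * a - x) ≤ φ x
      simp only [hφ, gaussianPDFReal, NNReal.coe_one, mul_one, sub_zero]
      have hexp : rexp (-(2 * a - x) ^ 2 / 2) ≤ rexp (-x ^ 2 / 2) := by
        apply Real.exp_le_exp.mpr
        nlinarith
      have hpos : (0:ℝ) ≤ (√(2 * π))⁻¹ := by positivity
      exact mul_le_mul_of_nonneg_left hexp hpos
    linarith [h1 ▸ h4, h2.symm ▸ h3]
  have hadd1 : (∫ x in (t-a)..(-a), φ x) + (∫ x in (-a)..a, φ x) = ∫ x in (t-a)..a, φ x :=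
    intervalIntegral.integral_add_adjacent_intervals (hint _ _) (hint _ _)
  have hadd2 : (∫ x in (t-a)..a, φ x) + (∫ x in a..(t+a), φ x) = ∫ x in (t-a)..(t+a), φ x :=
    intervalIntegral.integral_add_adjacent_intervals (hint _ _) (hint _ _)
  have hsymm : (∫ x in (t-a)..(-a), φ x) = - ∫ x in (-a)..(t-a), φ x :=
    (intervalIntegral.integral_symm _ _)
  linarith

lemma gaussianReal_even_shift (a t : ℝ) (ha : 0 ≤ a) :
    ∫ x in (t - a)..(t + a), gaussianPDFReal 0 1 x ≤ ∫ x in (-a)..a, gaussianPDFReal 0 1 x := by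
  set φ := gaussianPDFReal 0 1 with hφ
  have heven : ∀ x, φ (-x) = φ x := by
    intro x; simp [hφ, gaussianPDFReal, neg_sq]
  rcases le_total 0 t with ht | ht
  · exact phi_shift_integral_le a t ha ht
  · have h1 := phi_shift_integral_le a (-t) ha (by linarith)
    have h2 : (∫ x in (t - a)..(t + a), φ x) = ∫ x in (-t - a)..(-t + a), φ x := by
      have h3 : (∫ x in (-t - a)..(-t + a), φ (-x)) = ∫ x in (-(-t+a))..(-(-t-a)), φ x :=
        intervalIntegral.integral_comp_neg φ
      simp_rw [heven] at h3
      rw [h3]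
      congr 1 <;> ring
    linarith

lemma oneD_shift (c A : ℝ) :
    gaussianReal 0 1 {x | (x + c) ^ 2 ≤ A} ≤ gaussianReal 0 1 {x | x ^ 2 ≤ A} := by
  by_cases hA : 0 ≤ A
  · set a := Real.sqrt A with haa
    have ha : 0 ≤ a := Real.sqrt_nonneg A
    have haA : a ^ 2 = A := Real.sq_sqrt hA
    have hset : ∀ t : ℝ, {x : ℝ | (x + t) ^ 2 ≤ A} = Set.Icc (-t - a) (-t + a) := by
      intro t
      ext x
      simp only [Set.mem_setOf_eq, Set.mem_Icc]
      constructor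
      · intro h
        have h2 : |x + t| ≤ a := by
          rw [← Real.sqrt_sq_eq_abs, haa]
          exact Real.sqrt_le_sqrt h
        rw [abs_le] at h2
        constructor <;> linarith [h2.1, h2.2]
      · intro ⟨h1, h2⟩
        nlinarith
    have hset0 : {x : ℝ | x ^ 2 ≤ A} = Set.Icc (-a) a := by
      have := hset 0
      simpa using this
    rw [hset, hset0, gaussianReal_apply_eq_integral 0 (by norm_num) _,
      gaussianReal_apply_eq_integral 0 (by norm_num) _]
    apply ENNReal.ofReal_le_ofReal
    rw [MeasureTheory.integral_Icc_eq_integral_Ioc, MeasureTheory.integral_Icc_eq_integral_Ioc,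
      ← intervalIntegral.integral_of_le (by linarith), ← intervalIntegral.integral_of_le (by linarith)]
    have := gaussianReal_even_shift a (-c) ha
    simpa using this
  · have : {x : ℝ | (x + c) ^ 2 ≤ A} = ∅ := by
      ext x; simp only [Set.mem_setOf_eq, Set.mem_empty_iff_false, iff_false]
      intro h; nlinarith [sq_nonneg (x + c)]
    rw [this]
    simp

lemma lintegral_pi_prod {m : ℕ} (f : Fin m → ℝ → ENNReal) (hf : ∀ i, Measurable (f i)) :
    ∫⁻ x, ∏ i, f i (x i) ∂(Measure.pi fun _ : Fin m => (volume : Measure ℝ))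
      = ∏ i, ∫⁻ y, f i y := by
  induction m with
  | zero => simp [Measure.pi_of_empty]
  | succ n ih =>
    have hmp := measurePreserving_piFinSuccAbove (fun _ : Fin (n+1) => (volume : Measure ℝ)) 0
    have hg : Measurable (fun p : ℝ × (Fin n → ℝ) => f 0 p.1 * ∏ j, f j.succ (p.2 j)) := by
      apply Measurable.mul ((hf 0).comp measurable_fst)
      apply Finset.measurable_prod
      intro j _
      exact (hf j.succ).comp ((measurable_pi_apply j).comp measurable_snd)
    have h1 : ∫⁻ x, ∏ i, f i (x i) ∂(Measure.pi fun _ : Fin (n+1) => (volume : Measure ℝ))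
        = ∫⁻ p, f 0 p.1 * ∏ j, f j.succ (p.2 j)
            ∂((volume : Measure ℝ).prod (Measure.pi fun _ : Fin n => (volume : Measure ℝ))) := by
      rw [← hmp.lintegral_comp hg]
      congr 1
      ext x
      simp [MeasurableEquiv.piFinSuccAbove_apply, Fin.removeNth, Fin.prod_univ_succ,
        Fin.zero_succAbove, Fin.tail]
    rw [h1, lintegral_prod_mul (f := f 0) (g := fun z : Fin n → ℝ => ∏ j, f j.succ (z j))
      ((hf 0).aemeasurable)
      ((Finset.measurable_prod _ fun j _ => (hf j.succ).comp (measurable_pi_apply j)).aemeasurable),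
      ih (fun j => f j.succ) (fun j => hf j.succ), Fin.prod_univ_succ]

lemma pi_gaussian_eq_withDensity (m : ℕ) :
    (Measure.pi fun _ : Fin m => gaussianReal 0 1) =
      (volume : Measure (Fin m → ℝ)).withDensity (fun x => ∏ i, gaussianPDF 0 1 (x i)) := by
  have hφ : Measurable (gaussianPDF (0:ℝ) 1) := measurable_gaussianPDF 0 1
  refine Measure.pi_eq fun s hs => ?_
  rw [withDensity_apply _ (MeasurableSet.univ_pi hs)]
  have hind : ∀ x : Fin m → ℝ,
      (Set.univ.pi s).indicator (fun x => ∏ i, gaussianPDF 0 1 (x i)) x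
        = ∏ i, (s i).indicator (gaussianPDF 0 1) (x i) := by
    intro x
    by_cases hx : x ∈ Set.univ.pi s
    · rw [Set.indicator_of_mem hx]
      apply Finset.prod_congr rfl
      intro i _
      rw [Set.indicator_of_mem (hx i (Set.mem_univ i))]
    · rw [Set.indicator_of_notMem hx]
      rw [Set.mem_univ_pi] at hx
      push_neg at hx
      obtain ⟨i, hi⟩ := hx
      symm
      apply Finset.prod_eq_zero (Finset.mem_univ i)
      rw [Set.indicator_of_notMem hi]
  rw [← lintegral_indicator (MeasurableSet.univ_pi hs)]
  simp_rw [hind]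
  rw [volume_pi, lintegral_pi_prod (fun i => (s i).indicator (gaussianPDF 0 1))
    (fun i => hφ.indicator (hs i))]
  apply Finset.prod_congr rfl
  intro i _
  rw [gaussianReal_apply 0 (by norm_num) (s i), ← lintegral_indicator (hs i)]

/-- The standard-Gaussian density on Euclidean space, as a radial function. -/
noncomputable def gaussDen (d : ℕ) (y : EuclideanSpace ℝ (Fin d)) : ENNReal :=
  ENNReal.ofReal ((√(2 * π))⁻¹ ^ d * rexp (-‖y‖ ^ 2 / 2))

lemma gaussDen_eq_prod (d : ℕ) (x : Fin d → ℝ) :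
    (∏ i, gaussianPDF 0 1 (x i))
      = gaussDen d ((MeasurableEquiv.toLp 2 (Fin d → ℝ)) x) := by
  have hnorm : ‖(MeasurableEquiv.toLp 2 (Fin d → ℝ)) x‖ ^ 2 = ∑ i, (x i) ^ 2 := by
    rw [EuclideanSpace.norm_eq]
    rw [Real.sq_sqrt (by positivity)]
    simp [MeasurableEquiv.coe_toLp, Real.norm_eq_abs, sq_abs]
  rw [gaussDen, hnorm]
  simp_rw [gaussianPDF]
  rw [← ENNReal.ofReal_prod_of_nonneg (fun i _ => gaussianPDFReal_nonneg 0 1 (x i))]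
  congr 1
  simp only [gaussianPDFReal, NNReal.coe_one, mul_one, sub_zero]
  rw [Finset.prod_mul_distrib, Finset.prod_const, ← Real.exp_sum]
  congr 1
  · simp
  · rw [← Finset.sum_div, ← Finset.sum_neg_distrib]

lemma gaussianPi_eq_withDensity (d : ℕ) :
    gaussianPi d 0 1 = (volume : Measure (EuclideanSpace ℝ (Fin d))).withDensity (gaussDen d) := by
  have h0 : (fun i : Fin d => gaussianReal ((0 : EuclideanSpace ℝ (Fin d)) i)
      (Real.toNNReal (1 ^ 2))) = fun _ : Fin d => gaussianReal 0 1 := by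
    funext i
    norm_num
  rw [gaussianPi, h0, pi_gaussian_eq_withDensity d]
  have hden : Measurable (gaussDen d) := by
    apply Measurable.ennreal_ofReal
    apply Measurable.const_mul
    exact (((measurable_norm.pow_const _).neg.div_const _).exp)
  refine Measure.ext fun S hS => ?_
  rw [Measure.map_apply (MeasurableEquiv.measurable _) hS,
    withDensity_apply _ ((MeasurableEquiv.measurable _) hS), withDensity_apply _ hS]
  have := ((EuclideanSpace.volume_preserving_symm_measurableEquiv_toLp (Fin d)).symm).setLIntegral_comp_preimage_emb
    (MeasurableEquiv.measurableEmbedding _) (gaussDen d) S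
  rw [← this]
  apply setLIntegral_congr_fun_ae ((MeasurableEquiv.measurable _) hS)
  exact ae_of_all _ fun x _ => gaussDen_eq_prod d x

lemma gaussianPi_isometry_preimage (d : ℕ)
    (f : EuclideanSpace ℝ (Fin d) ≃ₗᵢ[ℝ] EuclideanSpace ℝ (Fin d))
    (S : Set (EuclideanSpace ℝ (Fin d))) (hS : MeasurableSet S) :
    gaussianPi d 0 1 (f ⁻¹' S) = gaussianPi d 0 1 S := by
  rw [gaussianPi_eq_withDensity, withDensity_apply _ (hS.preimage f.continuous.measurable),
    withDensity_apply _ hS]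
  have hmp : MeasurePreserving f volume volume := f.measurePreserving
  have hemb : MeasurableEmbedding f := f.toHomeomorph.measurableEmbedding
  rw [← hmp.setLIntegral_comp_preimage_emb hemb (gaussDen d) S]
  apply setLIntegral_congr_fun_ae (hS.preimage f.continuous.measurable)
  refine ae_of_all _ fun x _ => ?_
  simp [gaussDen, f.norm_map]


lemma pi_shift_formula (n : ℕ) (c r : ℝ) (hr : 0 ≤ r) :
    gaussianPi (n+1) 0 1 {y : EuclideanSpace ℝ (Fin (n+1)) |
        ‖y + c • (EuclideanSpace.single (0 : Fin (n+1)) (1:ℝ))‖ ≤ r}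
      = ∫⁻ z, gaussianReal 0 1 {y : ℝ | (y + c) ^ 2 ≤ r ^ 2 - ∑ j, (z j) ^ 2}
          ∂(Measure.pi fun _ : Fin n => gaussianReal 0 1) := by
  set w : EuclideanSpace ℝ (Fin (n+1)) := c • (EuclideanSpace.single (0 : Fin (n+1)) (1:ℝ))
    with hwdef
  have hS : MeasurableSet {y : EuclideanSpace ℝ (Fin (n+1)) | ‖y + w‖ ≤ r} :=
    (isClosed_le (by continuity) continuous_const).measurableSet
  have h0 : (fun i : Fin (n+1) => gaussianReal ((0 : EuclideanSpace ℝ (Fin (n+1))) i)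
      (Real.toNNReal (1 ^ 2))) = fun _ : Fin (n+1) => gaussianReal 0 1 := by
    funext i
    norm_num
  rw [gaussianPi, h0, Measure.map_apply (MeasurableEquiv.measurable _) hS]
  set T : Set (ℝ × (Fin n → ℝ)) :=
    {p | (p.1 + c) ^ 2 + ∑ j, (p.2 j) ^ 2 ≤ r ^ 2} with hTdef
  have hT : MeasurableSet T := by
    apply measurableSet_le _ measurable_const
    apply Measurable.add
    · exact ((measurable_fst.add_const c).pow_const 2)
    · exact Finset.measurable_sum _ fun j _ =>
        ((measurable_pi_apply j).comp measurable_snd).pow_const 2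
  have hpre : (MeasurableEquiv.toLp 2 (Fin (n+1) → ℝ)) ⁻¹'
      {y : EuclideanSpace ℝ (Fin (n+1)) | ‖y + w‖ ≤ r}
      = (MeasurableEquiv.piFinSuccAbove (fun _ : Fin (n+1) => ℝ) 0) ⁻¹' T := by
    ext x
    simp only [Set.mem_preimage, Set.mem_setOf_eq, hTdef,
      MeasurableEquiv.piFinSuccAbove_apply, Fin.insertNthEquiv, Equiv.coe_fn_symm_mk,
      Fin.removeNth, Fin.zero_succAbove]
    rw [EuclideanSpace.norm_eq, Real.sqrt_le_iff]
    have hcoord : ∀ i : Fin (n+1),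
        ((MeasurableEquiv.toLp 2 (Fin (n+1) → ℝ)) x + w) i = x i + w i :=
      fun i => rfl
    simp only [hcoord]
    have hw0 : w 0 = c := by simp [hwdef, EuclideanSpace.single_apply]
    have hwsucc : ∀ j : Fin n, w j.succ = 0 := by
      intro j
      simp [hwdef, EuclideanSpace.single_apply, (Fin.succ_ne_zero j)]
    rw [Fin.sum_univ_succ]
    simp only [hw0, hwsucc, add_zero, Real.norm_eq_abs, sq_abs]
    constructor
    · rintro ⟨-, h⟩
      convert h using 2
    · intro h
      refine ⟨hr, ?_⟩
      convert h using 2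
  rw [hpre, (measurePreserving_piFinSuccAbove (fun _ : Fin (n+1) => gaussianReal 0 1)
      0).measure_preimage hT.nullMeasurableSet,
    Measure.prod_apply_symm hT]
  congr 1
  funext z
  congr 1
  ext y
  simp only [Set.mem_preimage, hTdef, Set.mem_setOf_eq]
  constructor <;> intro h <;> linarith

end Aux

/-- For `y ~ N(0, I_d)`, `v ∈ ℝ^d` and `r ≥ ‖v‖`:
`P(‖y‖ ≤ r − ‖v‖) ≤ P(‖y + v‖ ≤ r) ≤ P(‖y‖ ≤ r)`. -/
theorem gaussian_shifted_ball_bounds (d : ℕ) (hd : 1 ≤ d) (v : EuclideanSpace ℝ (Fin d))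
    (r : ℝ) (hr : ‖v‖ ≤ r) :
    (gaussianPi d 0 1) {y : EuclideanSpace ℝ (Fin d) | ‖y‖ ≤ r - ‖v‖} ≤
        (gaussianPi d 0 1) {y : EuclideanSpace ℝ (Fin d) | ‖y + v‖ ≤ r} ∧
      (gaussianPi d 0 1) {y : EuclideanSpace ℝ (Fin d) | ‖y + v‖ ≤ r} ≤
        (gaussianPi d 0 1) {y : EuclideanSpace ℝ (Fin d) | ‖y‖ ≤ r} := by
  constructor
  · apply measure_mono
    intro y hy
    simp only [Set.mem_setOf_eq] at *
    calc ‖y + v‖ ≤ ‖y‖ + ‖v‖ := norm_add_le _ _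
      _ ≤ r := by linarith
  · obtain ⟨n, rfl⟩ : ∃ n, d = n + 1 := ⟨d - 1, by omega⟩
    have hv0 : 0 ≤ ‖v‖ := norm_nonneg v
    have hr0 : 0 ≤ r := le_trans hv0 hr
    set w : EuclideanSpace ℝ (Fin (n+1)) :=
      ‖v‖ • (EuclideanSpace.single (0 : Fin (n+1)) (1:ℝ)) with hwdef
    have hww : ‖w‖ = ‖v‖ := by
      rw [hwdef, norm_smul, EuclideanSpace.norm_single]
      simp [abs_of_nonneg hv0]
    set f := Submodule.reflection (ℝ ∙ (w - v))ᗮ with hfdef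
    have hfw : f w = v := Submodule.reflection_sub hww
    have hS : MeasurableSet {y : EuclideanSpace ℝ (Fin (n+1)) | ‖y + v‖ ≤ r} :=
      (isClosed_le (by continuity) continuous_const).measurableSet
    have hpre : f ⁻¹' {y : EuclideanSpace ℝ (Fin (n+1)) | ‖y + v‖ ≤ r}
        = {y : EuclideanSpace ℝ (Fin (n+1)) | ‖y + w‖ ≤ r} := by
      ext y
      simp only [Set.mem_preimage, Set.mem_setOf_eq]
      rw [← hfw, ← f.map_add, f.norm_map]
    rw [← gaussianPi_isometry_preimage _ f _ hS, hpre]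
    have h2 := pi_shift_formula n 0 r hr0
    simp only [zero_smul, add_zero] at h2
    rw [pi_shift_formula n ‖v‖ r hr0, h2]
    apply lintegral_mono
    intro z
    exact oneD_shift ‖v‖ (r ^ 2 - ∑ j, (z j) ^ 2)
end

section
/- Let d ≥ 1, let S be a symmetric real d×d matrix such that I − S is positive definite, let b ∈ ℝ^d, and let y ~ N(0, I_d). Then E[exp(½ ⟨y, S y⟩ + ⟨b, y⟩)] = det(I − S)^{−1/2} · exp(½ ⟨b, (I − S)^{−1} b⟩). -/
open scoped ENNReal NNReal
open MeasureTheory MeasureTheory.Measure ProbabilityTheory Matrix Real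

theorem aux_lintegral_fin_prod {n : ℕ} (f : Fin n → ℝ → ℝ≥0∞) (hf : ∀ i, Measurable (f i)) :
    ∫⁻ x : Fin n → ℝ, ∏ i, f i (x i) ∂(Measure.pi fun _ => (volume : Measure ℝ))
      = ∏ i, ∫⁻ x, f i x := by
  induction n with
  | zero => simp
  | succ n ih =>
    calc
      ∫⁻ x : Fin (n+1) → ℝ, ∏ i, f i (x i) ∂(Measure.pi fun _ => (volume : Measure ℝ))
          = ∫⁻ p : ℝ × (Fin n → ℝ), f 0 p.1 * ∏ i : Fin n, f i.succ (p.2 i)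
            ∂((volume : Measure ℝ).prod (Measure.pi fun _ => volume)) := by
        rw [← ((measurePreserving_piFinSuccAbove
            (fun _ : Fin (n+1) => (volume : Measure ℝ)) 0).symm).lintegral_comp_emb
          (MeasurableEquiv.measurableEmbedding _)]
        congr 1
        ext p
        simp [MeasurableEquiv.piFinSuccAbove_symm_apply, Fin.insertNthEquiv,
          Fin.insertNth_zero, Fin.prod_univ_succ, Fin.zero_succAbove]
      _ = (∫⁻ x, f 0 x) * ∏ i : Fin n, ∫⁻ x, f i.succ x := by
        rw [lintegral_prod_mul (f := f 0) (g := fun y : Fin n → ℝ => ∏ i : Fin n, f i.succ (y i)) (hf 0).aemeasurable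
          (Finset.measurable_prod _ fun i _ => (hf i.succ).comp (measurable_pi_apply i)).aemeasurable]
        rw [ih (fun i => f i.succ) (fun i => hf i.succ)]
      _ = ∏ i, ∫⁻ x, f i x := (Fin.prod_univ_succ fun i => ∫⁻ x, f i x).symm

theorem aux_gauss_pi_withDensity (d : ℕ) :
    (Measure.pi fun _ : Fin d => gaussianReal 0 1) =
      (volume : Measure (Fin d → ℝ)).withDensity fun x => ∏ i, gaussianPDF 0 1 (x i) := by
  refine Measure.pi_eq fun s hs => ?_
  rw [withDensity_apply _ (MeasurableSet.univ_pi hs), ← lintegral_indicator (MeasurableSet.univ_pi hs)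
    (fun a : Fin d → ℝ => ∏ i, gaussianPDF 0 1 (a i))]
  have hpt : ∀ x : Fin d → ℝ, (Set.univ.pi s).indicator (fun x => ∏ i, gaussianPDF 0 1 (x i)) x
      = ∏ i, (s i).indicator (gaussianPDF 0 1) (x i) := by
    intro x
    by_cases h : x ∈ Set.univ.pi s
    · rw [Set.indicator_of_mem h]
      exact Finset.prod_congr rfl fun i _ =>
        (Set.indicator_of_mem (h i (Set.mem_univ i)) _).symm
    · rw [Set.indicator_of_notMem h]
      rw [Set.mem_univ_pi] at h
      push_neg at h
      obtain ⟨i, hi⟩ := h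
      exact (Finset.prod_eq_zero (Finset.mem_univ i) (Set.indicator_of_notMem hi _)).symm
  simp_rw [hpt]
  rw [volume_pi, aux_lintegral_fin_prod _ (fun i => (measurable_gaussianPDF 0 1).indicator (hs i))]
  refine Finset.prod_congr rfl fun i _ => ?_
  rw [lintegral_indicator (hs i), gaussianReal_of_var_ne_zero 0 one_ne_zero,
    withDensity_apply _ (hs i)]

open scoped MatrixOrder Matrix.Norms.L2Operator in
theorem aux_gauss_int (d : ℕ) (A : Matrix (Fin d) (Fin d) ℝ) (hA : A.PosDef) :
    ∫ x : Fin d → ℝ, Real.exp (-(1/2) * (x ⬝ᵥ A.mulVec x))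
      = Real.sqrt (2 * π) ^ d * A.det ^ (-(1/2) : ℝ) := by
  classical
  set C := CFC.sqrt A with hC
  have hCsd : C.PosSemidef := (CFC.sqrt_nonneg A).posSemidef
  have hCC : C * C = A := CFC.sqrt_mul_sqrt_self A hA.posSemidef.nonneg
  have hCsymm : Cᵀ = C := by
    have := hCsd.isHermitian
    rwa [Matrix.IsHermitian, conjTranspose_eq_transpose_of_trivial] at this
  have hdetC_nonneg : 0 ≤ C.det := by
    exact hCsd.det_nonneg
  have hdetA_pos : 0 < A.det := hA.det_pos
  have hdetCC : C.det * C.det = A.det := by rw [← Matrix.det_mul, hCC]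
  have hdetC_pos : 0 < C.det := by
    rcases lt_or_eq_of_le hdetC_nonneg with h | h
    · exact h
    · exfalso
      rw [← h] at hdetCC
      simp only [mul_zero, zero_mul] at hdetCC
      linarith [hdetCC ▸ hdetA_pos]
  have hCunit : IsUnit C.det := (isUnit_iff_ne_zero).mpr (ne_of_gt hdetC_pos)
  have hCinv_symm : (C⁻¹)ᵀ = C⁻¹ := by rw [Matrix.transpose_nonsing_inv, hCsymm]
  have hCCinv : C * C⁻¹ = 1 := Matrix.mul_nonsing_inv _ hCunit
  have hCinvC : C⁻¹ * C = 1 := Matrix.nonsing_inv_mul _ hCunit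
  have hquad : ∀ u : Fin d → ℝ, (C⁻¹.mulVec u) ⬝ᵥ A.mulVec (C⁻¹.mulVec u) = u ⬝ᵥ u := by
    intro u
    rw [Matrix.mulVec_mulVec, Matrix.dotProduct_mulVec, ← Matrix.vecMul_transpose,
      Matrix.vecMul_vecMul, hCinv_symm]
    have h1 : C⁻¹ * (A * C⁻¹) = 1 := by
      rw [← hCC, Matrix.mul_assoc C C C⁻¹, hCCinv, Matrix.mul_one, hCinvC]
    rw [← Matrix.mul_assoc, Matrix.mul_assoc C⁻¹ A C⁻¹, h1, Matrix.vecMul_one]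
  set φ : (Fin d → ℝ) →ₗ[ℝ] (Fin d → ℝ) := Matrix.toLin' C⁻¹ with hφ
  have hdetφ : LinearMap.det φ = C.det⁻¹ := by
    rw [hφ, LinearMap.det_toLin', Matrix.det_nonsing_inv]
    simp [Ring.inverse_eq_inv']
  have hdetφ_ne : LinearMap.det φ ≠ 0 := by
    rw [hdetφ]; exact inv_ne_zero (ne_of_gt hdetC_pos)
  have hmap := Real.map_linearMap_volume_pi_eq_smul_volume_pi hdetφ_ne
  have hg_cont : Continuous fun x : Fin d → ℝ => Real.exp (-(1/2) * (x ⬝ᵥ A.mulVec x)) := by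
    simp only [dotProduct, Matrix.mulVec]
    fun_prop
  have hφ_cont : Continuous φ := LinearMap.continuous_on_pi φ
  have h1 : ∫ x, Real.exp (-(1/2) * (x ⬝ᵥ A.mulVec x)) ∂((volume : Measure (Fin d → ℝ)).map φ)
      = √(2 * π) ^ d := by
    rw [integral_map hφ_cont.measurable.aemeasurable hg_cont.aestronglyMeasurable]
    have hpt : ∀ u : Fin d → ℝ, Real.exp (-(1/2) * ((φ u) ⬝ᵥ A.mulVec (φ u)))
        = ∏ i, Real.exp (-(1/2) * (u i * u i)) := by
      intro u
      have hφu : φ u = C⁻¹.mulVec u := by simp [hφ, Matrix.toLin'_apply]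
      rw [hφu, hquad, dotProduct, ← Real.exp_sum, Finset.mul_sum]
    simp_rw [hpt]
    rw [volume_pi, MeasureTheory.integral_fintype_prod_eq_pow (ι := Fin d)
      (f := fun t : ℝ => Real.exp (-(1/2) * (t * t)))]
    have hg1 : ∫ t : ℝ, Real.exp (-(1/2) * (t * t)) = √(2 * π) := by
      have h0 : ∀ t : ℝ, -(1/2 : ℝ) * (t * t) = -(1/2 : ℝ) * t ^ 2 := fun t => by ring
      simp_rw [h0]
      rw [integral_gaussian, show π / (1/2 : ℝ) = 2 * π by ring]
    rw [hg1, Fintype.card_fin]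
  have h2 : ∫ x, Real.exp (-(1/2) * (x ⬝ᵥ A.mulVec x)) ∂((volume : Measure (Fin d → ℝ)).map φ)
      = C.det * ∫ x, Real.exp (-(1/2) * (x ⬝ᵥ A.mulVec x)) := by
    rw [hmap, integral_smul_measure]
    congr 1
    rw [hdetφ, inv_inv, abs_of_nonneg hdetC_nonneg, ENNReal.toReal_ofReal hdetC_nonneg]
  have hfinal : (∫ x : Fin d → ℝ, Real.exp (-(1/2) * (x ⬝ᵥ A.mulVec x)))
      = C.det⁻¹ * √(2 * π) ^ d := by
    rw [← h1, h2, ← mul_assoc, inv_mul_cancel₀ (ne_of_gt hdetC_pos), one_mul]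
  rw [hfinal]
  have hr : A.det ^ (-(1/2) : ℝ) = C.det⁻¹ := by
    rw [← hdetCC, ← sq, ← Real.rpow_natCast C.det 2, ← Real.rpow_mul hdetC_nonneg]
    norm_num
    rw [Real.rpow_neg hdetC_nonneg, Real.rpow_one]
  rw [hr]
  ring

theorem aux_gauss_int_lin (d : ℕ) (A : Matrix (Fin d) (Fin d) ℝ) (hA : A.PosDef)
    (b : Fin d → ℝ) :
    ∫ x : Fin d → ℝ, Real.exp (-(1/2) * (x ⬝ᵥ A.mulVec x) + b ⬝ᵥ x)
      = Real.sqrt (2 * π) ^ d * A.det ^ (-(1/2) : ℝ)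
        * Real.exp ((1/2) * (b ⬝ᵥ A⁻¹.mulVec b)) := by
  classical
  have hAsymm : Aᵀ = A := by
    have := hA.isHermitian
    rwa [Matrix.IsHermitian, conjTranspose_eq_transpose_of_trivial] at this
  have hAunit : IsUnit A.det := (isUnit_iff_ne_zero).mpr (ne_of_gt hA.det_pos)
  set m : Fin d → ℝ := A⁻¹.mulVec b with hm
  have hAm : A.mulVec m = b := by
    rw [hm, Matrix.mulVec_mulVec, Matrix.mul_nonsing_inv _ hAunit, Matrix.one_mulVec]
  have hsq : ∀ x : Fin d → ℝ,
      -(1/2) * (x ⬝ᵥ A.mulVec x) + b ⬝ᵥ x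
        = -(1/2) * ((x - m) ⬝ᵥ A.mulVec (x - m)) + (1/2) * (b ⬝ᵥ A⁻¹.mulVec b) := by
    intro x
    have e1 : (x - m) ⬝ᵥ A.mulVec (x - m)
        = x ⬝ᵥ A.mulVec x - x ⬝ᵥ A.mulVec m - m ⬝ᵥ A.mulVec x + m ⬝ᵥ A.mulVec m := by
      rw [Matrix.mulVec_sub, sub_dotProduct, dotProduct_sub,
        dotProduct_sub]
      ring
    have e2 : x ⬝ᵥ A.mulVec m = b ⬝ᵥ x := by rw [hAm, dotProduct_comm]
    have e3 : m ⬝ᵥ A.mulVec x = b ⬝ᵥ x := by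
      rw [Matrix.dotProduct_mulVec, ← hAsymm, Matrix.vecMul_transpose, hAm]
    have e4 : m ⬝ᵥ A.mulVec m = b ⬝ᵥ A⁻¹.mulVec b := by
      rw [hAm, dotProduct_comm, hm]
    rw [e1, e2, e3, e4]
    ring
  simp_rw [hsq]
  have hsplit : ∀ x : Fin d → ℝ,
      Real.exp (-(1/2) * ((x - m) ⬝ᵥ A.mulVec (x - m)) + (1/2) * (b ⬝ᵥ A⁻¹.mulVec b))
      = Real.exp ((1/2) * (b ⬝ᵥ A⁻¹.mulVec b))
        * Real.exp (-(1/2) * ((x - m) ⬝ᵥ A.mulVec (x - m))) := by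
    intro x; rw [← Real.exp_add]; ring_nf
  simp_rw [hsplit]
  rw [integral_const_mul]
  rw [integral_sub_right_eq_self (fun x : Fin d → ℝ =>
    Real.exp (-(1/2) * (x ⬝ᵥ A.mulVec x))) m]
  rw [aux_gauss_int d A hA]
  ring

/-- Gaussian quadratic exponential moment: if `S` is symmetric with `I - S` positive definite
and `y ~ N(0, I_d)`, then
`E[exp(½ ⟨y, S y⟩ + ⟨b, y⟩)] = det(I − S)^{−1/2} · exp(½ ⟨b, (I − S)⁻¹ b⟩)`. -/
theorem gaussian_quadratic_exponential_moment (d : ℕ) (hd : 1 ≤ d)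
    (S : Matrix (Fin d) (Fin d) ℝ) (hsymm : S.IsSymm) (hpos : (1 - S).PosDef)
    (b : Fin d → ℝ) :
    ∫ y, Real.exp ((1 / 2) * ((y : Fin d → ℝ) ⬝ᵥ S.mulVec (y : Fin d → ℝ))
          + b ⬝ᵥ (y : Fin d → ℝ)) ∂(gaussianPi d 0 1)
      = ((1 - S).det) ^ (-(1 / 2) : ℝ) *
        Real.exp ((1 / 2) * (b ⬝ᵥ (1 - S)⁻¹.mulVec b)) := by
  classical
  have hmeas_eq : gaussianPi d 0 1
      = (Measure.pi fun _ : Fin d => gaussianReal 0 1).map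
          (MeasurableEquiv.toLp 2 (Fin d → ℝ)) := by
    unfold gaussianPi
    refine congrArg _ (congrArg Measure.pi (funext fun i => ?_))
    norm_num
  rw [hmeas_eq]
  have hstep1 : ∫ y, Real.exp ((1 / 2) * ((y : Fin d → ℝ) ⬝ᵥ S.mulVec (y : Fin d → ℝ))
          + b ⬝ᵥ (y : Fin d → ℝ))
        ∂((Measure.pi fun _ : Fin d => gaussianReal 0 1).map
          (MeasurableEquiv.toLp 2 (Fin d → ℝ)))
      = ∫ x : Fin d → ℝ, Real.exp ((1 / 2) * (x ⬝ᵥ S.mulVec x) + b ⬝ᵥ x)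
        ∂(Measure.pi fun _ : Fin d => gaussianReal 0 1) := by
    rw [MeasureTheory.integral_map_equiv]
    rfl
  rw [hstep1, aux_gauss_pi_withDensity]
  set g : (Fin d → ℝ) → ℝ≥0 := fun x => ∏ i, Real.toNNReal (gaussianPDFReal 0 1 (x i)) with hg
  have hgmeas : Measurable g :=
    Finset.measurable_prod _ fun i _ =>
      ((measurable_gaussianPDFReal 0 1).comp (measurable_pi_apply i)).real_toNNReal
  have hdens : (fun x : Fin d → ℝ => ∏ i, gaussianPDF 0 1 (x i))
      = fun x => (g x : ℝ≥0∞) := by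
    funext x
    rw [hg, ENNReal.coe_finset_prod]
    rfl
  rw [hdens, integral_withDensity_eq_integral_smul hgmeas]
  have hpt : ∀ x : Fin d → ℝ,
      g x • Real.exp ((1 / 2) * (x ⬝ᵥ S.mulVec x) + b ⬝ᵥ x)
        = (√(2 * π))⁻¹ ^ d
          * Real.exp (-(1/2) * (x ⬝ᵥ (1 - S).mulVec x) + b ⬝ᵥ x) := by
    intro x
    have hco : (g x : ℝ) = ∏ i, gaussianPDFReal 0 1 (x i) := by
      rw [hg]
      push_cast
      exact Finset.prod_congr rfl fun i _ =>
        Real.coe_toNNReal _ (gaussianPDFReal_nonneg 0 1 (x i))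
    have h1 : ∏ i, gaussianPDFReal 0 1 (x i)
        = (√(2 * π))⁻¹ ^ d * Real.exp (∑ i, -(x i)^2 / 2) := by
      simp only [gaussianPDFReal, NNReal.coe_one, mul_one, sub_zero]
      rw [Finset.prod_mul_distrib, Finset.prod_const, Real.exp_sum]
      simp [Finset.card_univ]
    have h2 : (∑ i, -(x i)^2 / 2) + ((1 / 2) * (x ⬝ᵥ S.mulVec x) + b ⬝ᵥ x)
        = -(1/2) * (x ⬝ᵥ (1 - S).mulVec x) + b ⬝ᵥ x := by
      have e1 : x ⬝ᵥ (1 - S).mulVec x = x ⬝ᵥ x - x ⬝ᵥ S.mulVec x := by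
        rw [Matrix.sub_mulVec, dotProduct_sub, Matrix.one_mulVec]
      have e2 : (∑ i, -(x i)^2 / 2) = -(1/2) * ∑ i, x i * x i := by
        rw [Finset.mul_sum]
        exact Finset.sum_congr rfl fun i _ => by ring
      have hxx : x ⬝ᵥ x = ∑ i, x i * x i := rfl
      rw [e1, e2, hxx]
      ring
    rw [NNReal.smul_def, smul_eq_mul, hco, h1, mul_assoc, ← Real.exp_add, h2]
  simp_rw [hpt]
  rw [MeasureTheory.integral_const_mul, aux_gauss_int_lin d (1 - S) hpos b]
  have hne : √(2 * π) ≠ 0 := by positivity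
  have hcan : ((√(2 * π))⁻¹) ^ d * (√(2 * π)) ^ d = 1 := by
    rw [← mul_pow, inv_mul_cancel₀ hne, one_pow]
  calc (√(2 * π))⁻¹ ^ d * (√(2 * π) ^ d * (1 - S).det ^ (-(1/2) : ℝ)
          * Real.exp ((1/2) * (b ⬝ᵥ (1 - S)⁻¹.mulVec b)))
      = ((√(2 * π))⁻¹ ^ d * (√(2 * π)) ^ d) * ((1 - S).det ^ (-(1/2) : ℝ)
          * Real.exp ((1/2) * (b ⬝ᵥ (1 - S)⁻¹.mulVec b))) := by ring
    _ = ((1 - S).det) ^ (-(1 / 2) : ℝ) *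
        Real.exp ((1 / 2) * (b ⬝ᵥ (1 - S)⁻¹.mulVec b)) := by
      rw [hcan, one_mul]
end

section
/- Let d ≥ 1, μ ∈ ℝ^d, and let H be a symmetric real d×d matrix. Then there exist constants C > 0 and τ₀ > 0 such that for all τ ∈ (0, τ₀), if z₁, z₂ are independent random vectors each distributed N(μ, τ² I_d), then exp(μᵀHμ) ≤ E[exp(⟨z₁, H z₂⟩)] ≤ (1 + C τ²) exp(μᵀHμ). -/
open MeasureTheory ProbabilityTheory Matrix
open Real
open scoped NNReal ENNReal

section Aux

lemma aux_exp_le {x : ℝ} (h0 : 0 ≤ x) (h1 : x ≤ 1/2) : Real.exp x ≤ 1 + 2*x := by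
  have h2 : 1 - x ≤ Real.exp (-x) := by linarith [Real.add_one_le_exp (-x)]
  have h3 : Real.exp x * (1-x) ≤ 1 := by
    calc Real.exp x * (1-x) ≤ Real.exp x * Real.exp (-x) :=
          mul_le_mul_of_nonneg_left h2 (Real.exp_pos x).le
    _ = 1 := by rw [← Real.exp_add]; simp
  nlinarith [Real.exp_pos x]

lemma aux_inv_sqrt_le {u : ℝ} (h0 : 0 ≤ u) (h1 : u ≤ 1/2) :
    (Real.sqrt (1-u))⁻¹ ≤ Real.exp u := by
  have he : Real.exp (-(2*u)) ≤ 1 - u := by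
    have h2 : 2*u + 1 ≤ Real.exp (2*u) := by linarith [Real.add_one_le_exp (2*u)]
    have h3 : Real.exp (-(2*u)) * Real.exp (2*u) = 1 := by rw [← Real.exp_add]; simp
    nlinarith [Real.exp_pos (-(2*u)), Real.exp_pos (2*u)]
  have hs : Real.exp (-u) ≤ Real.sqrt (1-u) := by
    have : Real.exp (-u) = Real.sqrt (Real.exp (-(2*u))) := by
      rw [show (-(2*u)) = (-u) + (-u) by ring, Real.exp_add,
        Real.sqrt_mul_self (Real.exp_pos _).le]
    rw [this]
    exact Real.sqrt_le_sqrt he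
  calc (Real.sqrt (1-u))⁻¹ ≤ (Real.exp (-u))⁻¹ := by
        exact inv_anti₀ (Real.exp_pos _) hs
  _ = Real.exp u := by rw [← Real.exp_neg, neg_neg]

lemma integrable_exp_quad {B : ℝ} (hB : 0 < B) (c d : ℝ) :
    Integrable (fun x : ℝ => Real.exp (-B*x^2 + c*x + d)) := by
  have key : ∀ x : ℝ, -B*x^2 + c*x + d
      = -B*(x + (-c/(2*B)))^2 + (d + c^2/(4*B)) := by
    intro x; field_simp; ring
  simp_rw [key, Real.exp_add]
  exact (((integrable_exp_neg_mul_sq hB).comp_add_right (-c/(2*B)))).mul_const _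

lemma integral_exp_quad {B : ℝ} (hB : 0 < B) (c d : ℝ) :
    ∫ x : ℝ, Real.exp (-B*x^2 + c*x + d)
      = Real.sqrt (π/B) * Real.exp (d + c^2/(4*B)) := by
  have key : ∀ x : ℝ, -B*x^2 + c*x + d
      = -B*(x + (-c/(2*B)))^2 + (d + c^2/(4*B)) := by
    intro x; field_simp; ring
  simp_rw [key, Real.exp_add, integral_mul_const]
  rw [integral_add_right_eq_self (fun x : ℝ => Real.exp (-B*x^2)) (-c/(2*B)),
    integral_gaussian]

lemma integral_gaussianReal_transfer (m : ℝ) {v : ℝ≥0} (hv : v ≠ 0) (f : ℝ → ℝ) :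
    ∫ x, f x ∂gaussianReal m v = ∫ x, gaussianPDFReal m v x * f x := by
  rw [gaussianReal_of_var_ne_zero _ hv]
  have hd : gaussianPDF m v = fun x => ((fun x => (gaussianPDFReal m v x).toNNReal) x : ℝ≥0∞) :=
    rfl
  rw [hd, integral_withDensity_eq_integral_smul
    ((measurable_gaussianPDFReal m v).real_toNNReal) f]
  congr 1 with x
  simp [NNReal.smul_def, Real.coe_toNNReal _ (gaussianPDFReal_nonneg m v x)]

lemma integrable_gaussianReal_iff (m : ℝ) {v : ℝ≥0} (hv : v ≠ 0) (f : ℝ → ℝ) :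
    Integrable f (gaussianReal m v) ↔
      Integrable (fun x => gaussianPDFReal m v x * f x) := by
  rw [gaussianReal_of_var_ne_zero _ hv]
  have hd : gaussianPDF m v = fun x => ((fun x => (gaussianPDFReal m v x).toNNReal) x : ℝ≥0∞) :=
    rfl
  rw [hd, integrable_withDensity_iff_integrable_smul
    ((measurable_gaussianPDFReal m v).real_toNNReal)]
  constructor <;> intro h <;>
  · refine h.congr (Filter.Eventually.of_forall fun x => ?_)
    simp [NNReal.smul_def, Real.coe_toNNReal _ (gaussianPDFReal_nonneg m v x)]

variable {v : ℝ} (m b c : ℝ)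

lemma pdf_mul_exp_eq (hv : 0 < v) (x : ℝ) :
    gaussianPDFReal m v.toNNReal x * Real.exp (b*x + c*x^2)
      = (Real.sqrt (2*π*v))⁻¹ *
        Real.exp (-(1/(2*v) - c)*x^2 + (b + m/v)*x + (-(m^2)/(2*v))) := by
  have hvv : ((v.toNNReal : ℝ≥0) : ℝ) = v := Real.coe_toNNReal v hv.le
  rw [gaussianPDFReal, hvv, mul_assoc, ← Real.exp_add]
  congr 2
  field_simp
  ring

lemma integrable_exp_quad_gaussianReal (hv : 0 < v) (h1 : 2*c*v < 1) :
    Integrable (fun x => Real.exp (b*x + c*x^2)) (gaussianReal m v.toNNReal) := by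
  have hvne : v.toNNReal ≠ 0 := by
    simp only [ne_eq, Real.toNNReal_eq_zero, not_le]; linarith
  rw [integrable_gaussianReal_iff m hvne]
  have hB : 0 < 1/(2*v) - c := by
    rw [sub_pos, lt_div_iff₀ (by linarith : (0:ℝ) < 2*v)]
    linarith
  refine (Integrable.congr ((integrable_exp_quad hB (b + m/v) (-(m^2)/(2*v))).const_mul
    ((Real.sqrt (2*π*v))⁻¹)) ?_)
  exact Filter.Eventually.of_forall fun x => (pdf_mul_exp_eq m b c hv x).symm

lemma integral_exp_quad_gaussianReal (hv : 0 < v) (h1 : 2*c*v < 1) :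
    ∫ x, Real.exp (b*x + c*x^2) ∂gaussianReal m v.toNNReal
      = (Real.sqrt (1 - 2*c*v))⁻¹ *
        Real.exp ((b*m + c*m^2 + v*b^2/2) / (1 - 2*c*v)) := by
  have hvne : v.toNNReal ≠ 0 := by
    simp only [ne_eq, Real.toNNReal_eq_zero, not_le]; linarith
  have hB : 0 < 1/(2*v) - c := by
    rw [sub_pos, lt_div_iff₀ (by linarith : (0:ℝ) < 2*v)]
    linarith
  rw [integral_gaussianReal_transfer m hvne]
  rw [show (fun x => gaussianPDFReal m v.toNNReal x * Real.exp (b*x + c*x^2))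
      = fun x => (Real.sqrt (2*π*v))⁻¹ *
        Real.exp (-(1/(2*v) - c)*x^2 + (b + m/v)*x + (-(m^2)/(2*v)))
    from funext fun x => pdf_mul_exp_eq m b c hv x]
  rw [integral_const_mul, integral_exp_quad hB]
  have hu : (0:ℝ) < 1 - 2*c*v := by linarith
  have hπv : (0:ℝ) < 2*π*v := by positivity
  have h3 : (1 - 2*c*v) ≠ 0 := hu.ne'
  have hpref : (Real.sqrt (2*π*v))⁻¹ * Real.sqrt (π/(1/(2*v) - c))
      = (Real.sqrt (1 - 2*c*v))⁻¹ := by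
    have hBe : 1/(2*v) - c = (1-2*c*v)/(2*v) := by
      field_simp
    have h2 : π/(1/(2*v) - c) = (2*π*v) * (1 - 2*c*v)⁻¹ := by
      rw [hBe, div_div_eq_mul_div, ← div_eq_mul_inv]
      ring
    rw [h2, Real.sqrt_mul hπv.le, Real.sqrt_inv, ← mul_assoc,
      inv_mul_cancel₀ (Real.sqrt_pos.mpr hπv).ne', one_mul]
  have hexp : -(m^2)/(2*v) + (b + m/v)^2/(4*(1/(2*v) - c))
      = (b*m + c*m^2 + v*b^2/2) / (1 - 2*c*v) := by
    rw [div_add_div _ _ (by positivity) (by positivity), div_eq_div_iff (by positivity) h3]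
    field_simp
    ring
  rw [← mul_assoc, hpref, hexp]

lemma integral_pi_prod {d : ℕ} (ν : Fin d → Measure ℝ) [h : ∀ i, SigmaFinite (ν i)]
    (f : Fin d → ℝ → ℝ) :
    ∫ x : Fin d → ℝ, ∏ i, f i (x i) ∂Measure.pi ν = ∏ i, ∫ x, f i x ∂ν i :=
  MeasureTheory.integral_fintype_prod_eq_prod (f := f) (μ := ν)

lemma integrable_pi_prod {d : ℕ} (ν : Fin d → Measure ℝ) [h : ∀ i, SigmaFinite (ν i)]
    {f : Fin d → ℝ → ℝ} (hf : ∀ i, Integrable (f i) (ν i)) :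
    Integrable (fun x : Fin d → ℝ => ∏ i, f i (x i)) (Measure.pi ν) :=
  MeasureTheory.Integrable.fintype_prod_dep (f := f) (μ := ν) hf

end Aux

set_option maxHeartbeats 2000000 in
lemma main_pi (d : ℕ) (μc : Fin d → ℝ) (H : Matrix (Fin d) (Fin d) ℝ) :
    ∃ C > (0:ℝ), ∃ τ₀ > (0:ℝ), ∀ τ : ℝ, 0 < τ → τ < τ₀ →
      Real.exp (μc ⬝ᵥ H.mulVec μc) ≤
        (∫ p : (Fin d → ℝ) × (Fin d → ℝ), Real.exp (p.1 ⬝ᵥ H.mulVec p.2)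
          ∂((Measure.pi fun i => gaussianReal (μc i) (Real.toNNReal (τ^2))).prod
            (Measure.pi fun i => gaussianReal (μc i) (Real.toNNReal (τ^2))))) ∧
      (∫ p : (Fin d → ℝ) × (Fin d → ℝ), Real.exp (p.1 ⬝ᵥ H.mulVec p.2)
          ∂((Measure.pi fun i => gaussianReal (μc i) (Real.toNNReal (τ^2))).prod
            (Measure.pi fun i => gaussianReal (μc i) (Real.toNNReal (τ^2))))) ≤
        (1 + C * τ^2) * Real.exp (μc ⬝ᵥ H.mulVec μc) := by
  classical
  obtain ⟨M, hM_def⟩ : ∃ M : ℝ, M = ∑ i, ∑ j, (H i j)^2 := ⟨_, rfl⟩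
  obtain ⟨R, hR_def⟩ : ∃ R : ℝ, R = ∑ i, ∑ j, |H i j| := ⟨_, rfl⟩
  obtain ⟨w, hw_def⟩ : ∃ w : Fin d → ℝ, w = H.mulVec μc := ⟨_, rfl⟩
  obtain ⟨S, hS_def⟩ : ∃ S : ℝ, S = μc ⬝ᵥ H.mulVec μc := ⟨_, rfl⟩
  obtain ⟨Nm, hNm_def⟩ : ∃ Nm : ℝ, Nm = ∑ i, (μc i)^2 := ⟨_, rfl⟩
  obtain ⟨W, hW_def⟩ : ∃ W : ℝ, W = ∑ i, (w i)^2 := ⟨_, rfl⟩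
  obtain ⟨K, hK_def⟩ : ∃ K : ℝ, K = M*Nm/2 + W/2 := ⟨_, rfl⟩
  obtain ⟨A, hA_def⟩ : ∃ A : ℝ, A = (d:ℝ)*M + 2 * |S| * M + 2*K + 1 := ⟨_, rfl⟩
  obtain ⟨Eg, hEg_def⟩ : ∃ Eg : ℝ, Eg = M + R + A := ⟨_, rfl⟩
  have hM0 : 0 ≤ M := hM_def ▸
    Finset.sum_nonneg fun i _ => Finset.sum_nonneg fun j _ => sq_nonneg _
  have hR0 : 0 ≤ R := hR_def ▸
    Finset.sum_nonneg fun i _ => Finset.sum_nonneg fun j _ => abs_nonneg _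
  have hNm0 : 0 ≤ Nm := hNm_def ▸ Finset.sum_nonneg fun i _ => sq_nonneg _
  have hW0 : 0 ≤ W := hW_def ▸ Finset.sum_nonneg fun i _ => sq_nonneg _
  have hK0 : 0 ≤ K := by
    rw [hK_def]
    have h1 := mul_nonneg hM0 hNm0
    linarith
  have hA1 : 1 ≤ A := by
    have h1 : 0 ≤ (d:ℝ)*M := mul_nonneg (Nat.cast_nonneg d) hM0
    have h2 : 0 ≤ 2 * |S| * M := mul_nonneg (mul_nonneg (by norm_num) (abs_nonneg S)) hM0
    rw [hA_def]; linarith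
  have hEg1 : 1 ≤ Eg := by rw [hEg_def]; linarith
  have hEg0 : 0 < Eg := by linarith
  have hC : (0:ℝ) < 2*A := by linarith
  have h2Eg : (0:ℝ) < 2*Eg := by linarith
  have hsq : 0 < Real.sqrt (1/(2*Eg)) := Real.sqrt_pos.mpr (one_div_pos.mpr h2Eg)
  refine ⟨2*A, hC, Real.sqrt (1/(2*Eg)), hsq, fun τ hτ hττ => ?_⟩
  obtain ⟨v, hv_def⟩ : ∃ v : ℝ, v = τ^2 := ⟨_, rfl⟩
  rw [← hv_def]
  have hv : 0 < v := by rw [hv_def]; positivity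
  have hvlt : v < 1/(2*Eg) := by
    rw [hv_def]
    have := pow_lt_pow_left₀ hττ hτ.le two_ne_zero
    rwa [Real.sq_sqrt (one_div_pos.mpr h2Eg).le] at this
  have hEgv : Eg * v < 1/2 := by
    have h2 : Eg * v < Eg * (1/(2*Eg)) := mul_lt_mul_of_pos_left hvlt hEg0
    have h3 : Eg * (1/(2*Eg)) = 1/2 := by field_simp
    linarith
  have hMv : M*v ≤ 1/2 := by nlinarith
  have hRv : R*v ≤ 1/2 := by nlinarith
  have hAv : A*v ≤ 1/2 := by nlinarith
  have hv1 : v ≤ 1 := by nlinarith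
  obtain ⟨ν, hν_def⟩ : ∃ ν : Fin d → Measure ℝ,
      ν = fun i => gaussianReal (μc i) (Real.toNNReal v) := ⟨_, rfl⟩
  obtain ⟨P, hP_def⟩ : ∃ P : Measure (Fin d → ℝ), P = Measure.pi ν := ⟨_, rfl⟩
  rw [← hν_def, ← hP_def]
  haveI hprob : ∀ i, IsProbabilityMeasure (ν i) := fun i => by rw [hν_def]; infer_instance
  haveI hsf : ∀ i, SigmaFinite (ν i) := fun i => inferInstance
  haveI : IsProbabilityMeasure P := by rw [hP_def]; infer_instance
  -- basic algebraic identities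
  have hdot : ∀ x y : Fin d → ℝ, x ⬝ᵥ H.mulVec y = ∑ j, (∑ i, x i * H i j) * y j := by
    intro x y
    simp only [dotProduct, mulVec, Finset.mul_sum, Finset.sum_mul]
    rw [Finset.sum_comm]
    exact Finset.sum_congr rfl fun j _ => Finset.sum_congr rfl fun i _ => by ring
  have hwi : ∀ i, w i = ∑ j, H i j * μc j := by
    intro i; rw [hw_def]; rfl
  have hxw : ∀ x : Fin d → ℝ, ∑ j, (∑ i, x i * H i j) * μc j = ∑ i, w i * x i := by
    intro x
    simp only [Finset.sum_mul]
    rw [Finset.sum_comm]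
    refine Finset.sum_congr rfl fun i _ => ?_
    rw [hwi i, Finset.sum_mul]
    exact Finset.sum_congr rfl fun j _ => by ring
  have hSsum : S = ∑ i, w i * μc i := by
    rw [hS_def]
    simp only [dotProduct]
    exact Finset.sum_congr rfl fun i _ => by rw [hw_def]; ring
  have hCS : ∀ x : Fin d → ℝ, ∑ j, (∑ i, x i * H i j)^2 ≤ M * ∑ i, (x i)^2 := by
    intro x
    calc ∑ j, (∑ i, x i * H i j)^2
        ≤ ∑ j, (∑ i, (x i)^2) * (∑ i, (H i j)^2) :=
          Finset.sum_le_sum fun j _ => Finset.sum_mul_sq_le_sq_mul_sq _ _ _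
    _ = (∑ i, (x i)^2) * ∑ j, ∑ i, (H i j)^2 := by rw [← Finset.mul_sum]
    _ = M * ∑ i, (x i)^2 := by rw [hM_def, Finset.sum_comm]; ring
  have hRrow : ∀ i, ∑ j, |H i j| ≤ R := by
    intro i
    rw [hR_def]
    exact Finset.single_le_sum (f := fun i => ∑ j, |H i j|)
      (fun i _ => Finset.sum_nonneg fun j _ => abs_nonneg _) (Finset.mem_univ i)
  have hRcol : ∀ j, ∑ i, |H i j| ≤ R := by
    intro j
    calc ∑ i, |H i j| ≤ ∑ j', ∑ i, |H i j'| :=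
          Finset.single_le_sum (f := fun j' => ∑ i, |H i j'|)
            (fun j' _ => Finset.sum_nonneg fun i _ => abs_nonneg _) (Finset.mem_univ j)
    _ = R := by rw [hR_def]; exact Finset.sum_comm
  have hbil : ∀ x y : Fin d → ℝ,
      x ⬝ᵥ H.mulVec y ≤ (R/2) * (∑ i, (x i)^2) + (R/2) * (∑ j, (y j)^2) := by
    intro x y
    have hterm : ∀ i j, x i * (H i j * y j)
        ≤ |H i j| * ((x i)^2/2) + |H i j| * ((y j)^2/2) := by
      intro i j
      calc x i * (H i j * y j) ≤ |x i * (H i j * y j)| := le_abs_self _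
      _ = |H i j| * (|x i| * |y j|) := by rw [abs_mul, abs_mul]; ring
      _ ≤ |H i j| * ((x i)^2/2) + |H i j| * ((y j)^2/2) := by
          rw [← mul_add]
          refine mul_le_mul_of_nonneg_left ?_ (abs_nonneg _)
          nlinarith [sq_nonneg (|x i| - |y j|), sq_abs (x i), sq_abs (y j)]
    calc x ⬝ᵥ H.mulVec y = ∑ i, ∑ j, x i * (H i j * y j) := by
          simp [dotProduct, mulVec, Finset.mul_sum]
    _ ≤ ∑ i, ∑ j, (|H i j| * ((x i)^2/2) + |H i j| * ((y j)^2/2)) :=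
          Finset.sum_le_sum fun i _ => Finset.sum_le_sum fun j _ => hterm i j
    _ = (∑ i, ∑ j, |H i j| * ((x i)^2/2)) + ∑ i, ∑ j, |H i j| * ((y j)^2/2) := by
          simp only [Finset.sum_add_distrib]
    _ = (∑ i, (∑ j, |H i j|) * ((x i)^2/2)) + ∑ j, (∑ i, |H i j|) * ((y j)^2/2) := by
          congr 1
          · exact Finset.sum_congr rfl fun i _ => (Finset.sum_mul _ _ _).symm
          · rw [Finset.sum_comm]
            exact Finset.sum_congr rfl fun j _ => (Finset.sum_mul _ _ _).symm
    _ ≤ (∑ i, R * ((x i)^2/2)) + ∑ j, R * ((y j)^2/2) := by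
          refine add_le_add (Finset.sum_le_sum fun i _ => ?_) (Finset.sum_le_sum fun j _ => ?_)
          · exact mul_le_mul_of_nonneg_right (hRrow i) (by positivity)
          · exact mul_le_mul_of_nonneg_right (hRcol j) (by positivity)
    _ = (R/2) * (∑ i, (x i)^2) + (R/2) * (∑ j, (y j)^2) := by
          rw [Finset.mul_sum, Finset.mul_sum]
          exact congrArg₂ (· + ·) (Finset.sum_congr rfl fun i _ => by ring)
            (Finset.sum_congr rfl fun j _ => by ring)
  -- measurability
  have hax_m : ∀ j, Measurable fun x : Fin d → ℝ => ∑ i, x i * H i j :=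
    fun j => Finset.measurable_sum _ fun i _ => (measurable_pi_apply i).mul_const _
  have hFm : Measurable fun p : (Fin d → ℝ) × (Fin d → ℝ) => p.1 ⬝ᵥ H.mulVec p.2 := by
    simp only [dotProduct, mulVec]
    exact Finset.measurable_sum _ fun i _ =>
      ((measurable_pi_apply i).comp measurable_fst).mul
        (Finset.measurable_sum _ fun j _ =>
          (by fun_prop : Measurable fun p : (Fin d → ℝ) × (Fin d → ℝ) => H i j * p.2 j))
  -- one-dimensional MGF
  have hmgf : ∀ (b : ℝ) (j : Fin d),
      ∫ t, Real.exp (b * t) ∂ν j = Real.exp (b * μc j + v * b^2/2) := by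
    intro b j
    rw [hν_def]
    have h := integral_exp_quad_gaussianReal (μc j) b 0 hv (by norm_num)
    have hfun : (fun t : ℝ => Real.exp (b * t)) = fun x => Real.exp (b*x + 0*x^2) := by
      funext x; norm_num
    rw [hfun, h]
    norm_num
  -- dominating function integrable
  have hDint : Integrable (fun x : Fin d → ℝ => ∏ i, Real.exp ((R/2) * (x i)^2)) P := by
    rw [hP_def]
    refine integrable_pi_prod ν (f := fun i t => Real.exp ((R/2) * t^2)) fun i => ?_
    rw [hν_def]
    have h := integrable_exp_quad_gaussianReal (μc i) 0 (R/2) hv (by nlinarith)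
    refine h.congr (Filter.Eventually.of_forall fun x => ?_)
    norm_num
  have hFint : Integrable (fun p : (Fin d → ℝ) × (Fin d → ℝ) =>
      Real.exp (p.1 ⬝ᵥ H.mulVec p.2)) (P.prod P) := by
    refine Integrable.mono' (hDint.mul_prod hDint) (hFm.exp.aestronglyMeasurable)
      (Filter.Eventually.of_forall fun p => ?_)
    rw [Real.norm_eq_abs, Real.abs_exp]
    calc Real.exp (p.1 ⬝ᵥ H.mulVec p.2)
        ≤ Real.exp ((R/2) * (∑ i, (p.1 i)^2) + (R/2) * (∑ j, (p.2 j)^2)) :=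
          Real.exp_le_exp.mpr (hbil p.1 p.2)
    _ = (∏ i, Real.exp ((R/2) * (p.1 i)^2)) * ∏ i, Real.exp ((R/2) * (p.2 i)^2) := by
        rw [Real.exp_add, Finset.mul_sum, Finset.mul_sum, Real.exp_sum, Real.exp_sum]
  -- inner integral
  obtain ⟨G, hG_def⟩ : ∃ G : (Fin d → ℝ) → ℝ, G = fun x =>
      Real.exp ((∑ i, w i * x i) + (v/2) * ∑ j, (∑ i, x i * H i j)^2) := ⟨_, rfl⟩
  have hinner : ∀ x : Fin d → ℝ, ∫ y, Real.exp (x ⬝ᵥ H.mulVec y) ∂P = G x := by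
    intro x
    have h1 : (fun y : Fin d → ℝ => Real.exp (x ⬝ᵥ H.mulVec y))
        = fun y => ∏ j, Real.exp ((∑ i, x i * H i j) * y j) := by
      funext y
      rw [hdot x y, Real.exp_sum]
    rw [h1, hP_def, integral_pi_prod ν (fun j t => Real.exp ((∑ i, x i * H i j) * t))]
    rw [Finset.prod_congr rfl fun j _ => hmgf (∑ i, x i * H i j) j, ← Real.exp_sum, hG_def]
    congr 1
    rw [Finset.sum_add_distrib, hxw x]
    congr 1
    rw [Finset.mul_sum]
    exact Finset.sum_congr rfl fun j _ => by ring
  have hGm : Measurable G := by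
    rw [hG_def]
    exact (((Finset.measurable_sum _ fun i _ => (by fun_prop : Measurable fun x : Fin d → ℝ => w i * x i))).add
      (((Finset.measurable_sum _ fun j _ => (hax_m j).pow_const 2)).const_mul (v/2))).exp
  have hIeq : (∫ p : (Fin d → ℝ) × (Fin d → ℝ),
      Real.exp (p.1 ⬝ᵥ H.mulVec p.2) ∂(P.prod P)) = ∫ x, G x ∂P := by
    rw [MeasureTheory.integral_prod _ hFint]
    exact integral_congr_ae (Filter.Eventually.of_forall fun x => hinner x)
  -- upper/lower comparison functions
  obtain ⟨Gb, hGb_def⟩ : ∃ Gb : (Fin d → ℝ) → ℝ,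
      Gb = fun x => ∏ i, Real.exp (w i * x i + (M*v/2) * (x i)^2) := ⟨_, rfl⟩
  obtain ⟨L, hL_def⟩ : ∃ L : (Fin d → ℝ) → ℝ,
      L = fun x => ∏ i, Real.exp (w i * x i) := ⟨_, rfl⟩
  have hMv2 : 2*(M*v/2)*v < 1 := by
    nlinarith [mul_le_mul hMv hv1 hv.le (by norm_num : (0:ℝ) ≤ 1/2)]
  have hGbint : Integrable Gb P := by
    rw [hGb_def, hP_def]
    exact integrable_pi_prod ν (f := fun i t => Real.exp (w i * t + (M*v/2) * t^2)) fun i => by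
      rw [hν_def]
      exact integrable_exp_quad_gaussianReal (μc i) (w i) (M*v/2) hv hMv2
  have hLint : Integrable L P := by
    rw [hL_def, hP_def]
    refine integrable_pi_prod ν (f := fun i t => Real.exp (w i * t)) fun i => ?_
    rw [hν_def]
    have h := integrable_exp_quad_gaussianReal (μc i) (w i) 0 hv (by norm_num)
    exact h.congr (Filter.Eventually.of_forall fun x => by norm_num)
  have hGleGb : ∀ x, G x ≤ Gb x := by
    intro x
    rw [hG_def, hGb_def]
    have hsum : (∑ i, w i * x i) + (v/2) * (M * ∑ i, (x i)^2)
        = ∑ i, (w i * x i + (M*v/2) * (x i)^2) := by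
      rw [Finset.sum_add_distrib]
      congr 1
      rw [Finset.mul_sum, Finset.mul_sum]
      exact Finset.sum_congr rfl fun i _ => by ring
    calc Real.exp ((∑ i, w i * x i) + (v/2) * ∑ j, (∑ i, x i * H i j)^2)
        ≤ Real.exp ((∑ i, w i * x i) + (v/2) * (M * ∑ i, (x i)^2)) := by
          apply Real.exp_le_exp.mpr
          have h0 : (0:ℝ) ≤ v/2 := by linarith
          have := mul_le_mul_of_nonneg_left (hCS x) h0
          linarith
    _ = ∏ i, Real.exp (w i * x i + (M*v/2) * (x i)^2) := by
          rw [hsum, Real.exp_sum]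
  have hGint : Integrable G P := by
    refine hGbint.mono' hGm.aestronglyMeasurable (Filter.Eventually.of_forall fun x => ?_)
    have hGpos : 0 < G x := by rw [hG_def]; exact Real.exp_pos _
    rw [Real.norm_eq_abs, abs_of_pos hGpos]
    exact hGleGb x
  have hLleG : ∀ x, L x ≤ G x := by
    intro x
    rw [hL_def, hG_def]
    have h2 : (0:ℝ) ≤ (v/2) * ∑ j, (∑ i, x i * H i j)^2 :=
      mul_nonneg (by linarith) (Finset.sum_nonneg fun j _ => sq_nonneg _)
    calc ∏ i, Real.exp (w i * x i) = Real.exp (∑ i, w i * x i) := (Real.exp_sum _ _).symm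
    _ ≤ Real.exp ((∑ i, w i * x i) + (v/2) * ∑ j, (∑ i, x i * H i j)^2) :=
        Real.exp_le_exp.mpr (by linarith)
  -- lower bound
  have hLval : ∫ x, L x ∂P = Real.exp (∑ i, (w i * μc i + v * (w i)^2/2)) := by
    rw [hL_def, hP_def, integral_pi_prod ν (fun i t => Real.exp (w i * t))]
    rw [Finset.prod_congr rfl fun i _ => hmgf (w i) i, ← Real.exp_sum]
  have hlow : Real.exp S ≤ ∫ x, L x ∂P := by
    rw [hLval]
    apply Real.exp_le_exp.mpr
    rw [Finset.sum_add_distrib, ← hSsum]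
    have h0 : (0:ℝ) ≤ ∑ i, v * (w i)^2/2 :=
      Finset.sum_nonneg fun i _ => by positivity
    linarith
  -- value of ∫ Gb
  obtain ⟨u, hu_def⟩ : ∃ u : ℝ, u = 2*(M*v/2)*v := ⟨_, rfl⟩
  have hu0 : 0 ≤ u := by
    rw [hu_def]
    nlinarith [mul_nonneg (mul_nonneg hM0 hv.le) hv.le]
  have hu2 : u ≤ 1/2 := by
    rw [hu_def]
    nlinarith [mul_le_mul hMv hv1 hv.le (by norm_num : (0:ℝ) ≤ 1/2)]
  have hGbval : ∫ x, Gb x ∂P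
      = (Real.sqrt (1 - u))⁻¹ ^ d * Real.exp ((S + v*K) / (1 - u)) := by
    have hper : ∀ i, ∫ t, Real.exp (w i * t + (M*v/2) * t^2) ∂ν i
        = (Real.sqrt (1 - 2*(M*v/2)*v))⁻¹ *
          Real.exp ((w i * μc i + (M*v/2)*(μc i)^2 + v*(w i)^2/2) / (1 - 2*(M*v/2)*v)) := by
      intro i
      rw [hν_def]
      exact integral_exp_quad_gaussianReal (μc i) (w i) (M*v/2) hv hMv2
    rw [hGb_def, hP_def,
      integral_pi_prod ν (fun i t => Real.exp (w i * t + (M*v/2) * t^2))]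
    rw [Finset.prod_congr rfl fun i _ => hper i]
    rw [Finset.prod_mul_distrib, Finset.prod_const, Finset.card_univ, Fintype.card_fin,
      ← Real.exp_sum, ← Finset.sum_div, ← hu_def]
    have hnum : ∑ i, (w i * μc i + (M*v/2)*(μc i)^2 + v*(w i)^2/2) = S + v*K := by
      rw [Finset.sum_add_distrib, Finset.sum_add_distrib, ← hSsum]
      have e1 : ∑ i, (M*v/2)*(μc i)^2 = (M*v/2) * Nm := by
        rw [hNm_def, Finset.mul_sum]
      have e2 : ∑ i, v*(w i)^2/2 = (v/2) * W := by
        rw [hW_def, Finset.mul_sum]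
        exact Finset.sum_congr rfl fun i _ => by ring
      rw [e1, e2, hK_def]; ring
    rw [hnum]
  -- upper bound estimates
  have hpref : (Real.sqrt (1 - u))⁻¹ ^ d ≤ Real.exp ((d:ℝ) * u) := by
    calc (Real.sqrt (1 - u))⁻¹ ^ d ≤ (Real.exp u) ^ d :=
          pow_le_pow_left₀ (inv_nonneg.mpr (Real.sqrt_nonneg _)) (aux_inv_sqrt_le hu0 hu2) d
    _ = Real.exp ((d:ℝ) * u) := by rw [← Real.exp_nat_mul]
  have hvK0 : 0 ≤ v*K := mul_nonneg hv.le hK0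
  have hexp_arg : (S + v*K) / (1 - u) ≤ S + (2 * |S| * u + 2*(v*K)) := by
    rw [div_le_iff₀ (by linarith : (0:ℝ) < 1 - u)]
    nlinarith [mul_nonneg (sub_nonneg.mpr (neg_abs_le S)) hu0,
      mul_nonneg (sub_nonneg.mpr (le_abs_self S)) hu0,
      mul_nonneg (mul_nonneg (abs_nonneg S) hu0) (by linarith : (0:ℝ) ≤ 1 - 2*u),
      mul_nonneg (mul_nonneg hv.le hK0) (by linarith : (0:ℝ) ≤ 1 - 2*u)]
  have huMv : u ≤ M*v := by
    rw [hu_def]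
    nlinarith [mul_nonneg (mul_nonneg hM0 hv.le) (by linarith : (0:ℝ) ≤ 1 - v)]
  have harg2 : (d:ℝ)*u + (2 * |S| * u + 2*(v*K)) ≤ A*v := by
    have h1 : (d:ℝ)*u ≤ (d:ℝ)*(M*v) :=
      mul_le_mul_of_nonneg_left huMv (Nat.cast_nonneg d)
    have h2 : 2 * |S| * u ≤ 2 * |S| * (M*v) :=
      mul_le_mul_of_nonneg_left huMv (by positivity)
    have h3 : (d:ℝ)*(M*v) = ((d:ℝ)*M)*v := by ring
    have h4 : 2 * |S| * (M*v) = (2 * |S| * M)*v := by ring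
    rw [hA_def]
    nlinarith [mul_nonneg (Nat.cast_nonneg d : (0:ℝ) ≤ d) hM0,
      mul_nonneg (mul_nonneg (by norm_num : (0:ℝ) ≤ 2) (abs_nonneg S)) hM0]
  have hfinal_upper : ∫ x, Gb x ∂P ≤ (1 + 2*A*v) * Real.exp S := by
    rw [hGbval]
    have h1 : (Real.sqrt (1 - u))⁻¹ ^ d * Real.exp ((S + v*K) / (1 - u))
        ≤ Real.exp ((d:ℝ)*u) * Real.exp (S + (2 * |S| * u + 2*(v*K))) :=
      mul_le_mul hpref (Real.exp_le_exp.mpr hexp_arg) (Real.exp_pos _).le (Real.exp_pos _).le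
    have h2 : Real.exp ((d:ℝ)*u) * Real.exp (S + (2 * |S| * u + 2*(v*K)))
        = Real.exp S * Real.exp ((d:ℝ)*u + (2 * |S| * u + 2*(v*K))) := by
      rw [← Real.exp_add, ← Real.exp_add]
      congr 1
      ring
    have h3 : Real.exp ((d:ℝ)*u + (2 * |S| * u + 2*(v*K))) ≤ Real.exp (A*v) :=
      Real.exp_le_exp.mpr harg2
    have h4 : Real.exp (A*v) ≤ 1 + 2*(A*v) := by
      refine aux_exp_le ?_ hAv
      nlinarith
    calc (Real.sqrt (1 - u))⁻¹ ^ d * Real.exp ((S + v*K) / (1 - u))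
        ≤ Real.exp S * Real.exp ((d:ℝ)*u + (2 * |S| * u + 2*(v*K))) := by rw [← h2]; exact h1
    _ ≤ Real.exp S * (1 + 2*(A*v)) := by
        refine mul_le_mul_of_nonneg_left (le_trans h3 h4) (Real.exp_pos _).le
    _ = (1 + 2*A*v) * Real.exp S := by ring
  -- conclude
  constructor
  · rw [hIeq, ← hS_def]
    calc Real.exp S ≤ ∫ x, L x ∂P := hlow
    _ ≤ ∫ x, G x ∂P := integral_mono hLint hGint hLleG
  · rw [hIeq, ← hS_def]
    calc ∫ x, G x ∂P ≤ ∫ x, Gb x ∂P := integral_mono hGint hGbint hGleGb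
    _ ≤ (1 + 2*A*v) * Real.exp S := hfinal_upper

lemma gaussianPi_eq (d : ℕ) (μ : EuclideanSpace ℝ (Fin d)) (τ : ℝ)
    (H : Matrix (Fin d) (Fin d) ℝ) :
    (∫ p, Real.exp ((p.1 : Fin d → ℝ) ⬝ᵥ H.mulVec (p.2 : Fin d → ℝ))
      ∂((gaussianPi d μ τ).prod (gaussianPi d μ τ))) =
    ∫ p : (Fin d → ℝ) × (Fin d → ℝ), Real.exp (p.1 ⬝ᵥ H.mulVec p.2)
      ∂((Measure.pi fun i => gaussianReal (μ i) (Real.toNNReal (τ ^ 2))).prod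
        (Measure.pi fun i => gaussianReal (μ i) (Real.toNNReal (τ ^ 2)))) := by
  set e := MeasurableEquiv.toLp 2 (Fin d → ℝ)
  rw [gaussianPi, Measure.map_prod_map _ _ e.measurable e.measurable,
    show Prod.map ⇑e ⇑e = ⇑(e.prodCongr e) from rfl, integral_map_equiv]
  rfl

/-- For a symmetric matrix `H` there exist `C > 0` and `τ₀ > 0` such that for all
`τ ∈ (0, τ₀)`, with `z₁, z₂` independent `N(μ, τ² I_d)` (modeled by the product measure):
`exp(μᵀHμ) ≤ E[exp(⟨z₁, H z₂⟩)] ≤ (1 + Cτ²) exp(μᵀHμ)`. -/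
theorem bilinear_gaussian_exp_moment_two_sided (d : ℕ) (hd : 1 ≤ d)
    (μ : EuclideanSpace ℝ (Fin d)) (H : Matrix (Fin d) (Fin d) ℝ) (hH : H.IsSymm) :
    ∃ C > (0 : ℝ), ∃ τ₀ > (0 : ℝ), ∀ τ : ℝ, 0 < τ → τ < τ₀ →
      Real.exp ((μ : Fin d → ℝ) ⬝ᵥ H.mulVec (μ : Fin d → ℝ)) ≤
        (∫ p, Real.exp ((p.1 : Fin d → ℝ) ⬝ᵥ H.mulVec (p.2 : Fin d → ℝ))
          ∂((gaussianPi d μ τ).prod (gaussianPi d μ τ))) ∧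
      (∫ p, Real.exp ((p.1 : Fin d → ℝ) ⬝ᵥ H.mulVec (p.2 : Fin d → ℝ))
          ∂((gaussianPi d μ τ).prod (gaussianPi d μ τ))) ≤
        (1 + C * τ ^ 2) * Real.exp ((μ : Fin d → ℝ) ⬝ᵥ H.mulVec (μ : Fin d → ℝ)) := by
  obtain ⟨C, hC, τ₀, hτ₀, h⟩ := main_pi d (μ : Fin d → ℝ) H
  refine ⟨C, hC, τ₀, hτ₀, fun τ hτ1 hτ2 => ?_⟩
  rw [gaussianPi_eq]
  exact h τ hτ1 hτ2
end

section
/- Let A, B, P̂ be real n×n matrices with rank(B) ≤ 2, rank(P̂) ≤ 2, and ‖P̂ − A‖_F ≤ ‖B − A‖_F. Then ‖P̂ − B‖_F ≤ (8/√3) ‖A − B‖₂. -/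
set_option maxHeartbeats 1000000
set_option synthInstance.maxHeartbeats 400000


open Matrix Finset
open scoped InnerProductSpace

/-- The operator (spectral) norm of a real matrix, i.e. the operator norm of the induced
continuous linear map on Euclidean space. -/
noncomputable def specNorm {n : ℕ} (M : Matrix (Fin n) (Fin n) ℝ) : ℝ :=
  ‖Matrix.toEuclideanCLM (𝕜 := ℝ) M‖

/-- The Frobenius norm of a real matrix. -/
noncomputable def frobNorm {n : ℕ} (M : Matrix (Fin n) (Fin n) ℝ) : ℝ :=
  Real.sqrt (∑ i, ∑ j, (M i j) ^ 2)

lemma specNorm_nonneg {n : ℕ} (M : Matrix (Fin n) (Fin n) ℝ) : 0 ≤ specNorm M :=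
  norm_nonneg _

lemma frobNorm_nonneg {n : ℕ} (M : Matrix (Fin n) (Fin n) ℝ) : 0 ≤ frobNorm M :=
  Real.sqrt_nonneg _

lemma frobNorm_sq {n : ℕ} (M : Matrix (Fin n) (Fin n) ℝ) :
    frobNorm M ^ 2 = ∑ i, ∑ j, (M i j) ^ 2 :=
  Real.sq_sqrt (by positivity)

lemma specNorm_transpose {n : ℕ} (N : Matrix (Fin n) (Fin n) ℝ) : specNorm Nᵀ = specNorm N := by
  unfold specNorm
  rw [← Matrix.conjTranspose_eq_transpose_of_trivial, ← Matrix.star_eq_conjTranspose,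
    map_star, ContinuousLinearMap.star_eq_adjoint]
  exact ContinuousLinearMap.adjoint.norm_map _

lemma sum_mul_le_sqrt_rank_spec_frob {n : ℕ} (M N : Matrix (Fin n) (Fin n) ℝ) :
    ∑ i, ∑ j, M i j * N i j ≤ Real.sqrt M.rank * specNorm N * frobNorm M := by
  classical
  let eL : (Fin n → ℝ) ≃ₗ[ℝ] EuclideanSpace ℝ (Fin n) := (WithLp.linearEquiv 2 ℝ (Fin n → ℝ)).symm
  have heL : ∀ (f : Fin n → ℝ) (i : Fin n), (eL f) i = f i := fun _ _ => rfl
  let U : Submodule ℝ (EuclideanSpace ℝ (Fin n)) := (LinearMap.range M.mulVecLin).map (eL : (Fin n → ℝ) →ₗ[ℝ] EuclideanSpace ℝ (Fin n))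
  have hrU : Module.finrank ℝ U = M.rank := by
    rw [Matrix.rank]
    exact LinearEquiv.finrank_map_eq eL _
  set r := Module.finrank ℝ U with hr
  let ob : OrthonormalBasis (Fin r) ℝ U := stdOrthonormalBasis ℝ U
  let colM : Fin n → EuclideanSpace ℝ (Fin n) := fun j => eL (fun i => M i j)
  let colN : Fin n → EuclideanSpace ℝ (Fin n) := fun j => eL (fun i => N i j)
  have hcolM : ∀ j i, colM j i = M i j := fun _ _ => rfl
  have hcolN : ∀ j i, colN j i = N i j := fun _ _ => rfl
  have hmem : ∀ j, colM j ∈ U := by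
    intro j
    refine Submodule.mem_map.2 ⟨M.mulVecLin (Pi.single j 1), LinearMap.mem_range_self _ _, ?_⟩
    show eL (M *ᵥ Pi.single j 1) = colM j
    simp only [Matrix.mulVec_single, mul_one, MulOpposite.op_one, one_smul]
    rfl
  let c : Fin r → Fin n → ℝ := fun k j => ⟪((ob k : U) : EuclideanSpace ℝ (Fin n)), colM j⟫_ℝ
  let g : Fin r → Fin n → ℝ := fun k j => ⟪((ob k : U) : EuclideanSpace ℝ (Fin n)), colN j⟫_ℝ
  -- Parseval for each column of M
  have hpar : ∀ j, ∑ k, c k j ^ 2 = ∑ i, M i j ^ 2 := by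
    intro j
    have hu : ∀ k, ob.repr ⟨colM j, hmem j⟩ k = c k j := by
      intro k
      rw [ob.repr_apply_apply]
      rfl
    calc ∑ k, c k j ^ 2 = ∑ k, ‖ob.repr ⟨colM j, hmem j⟩ k‖ ^ 2 := by
          simp [hu, Real.norm_eq_abs, sq_abs]
      _ = ‖ob.repr ⟨colM j, hmem j⟩‖ ^ 2 := by
          rw [EuclideanSpace.norm_eq, Real.sq_sqrt (by positivity)]
      _ = ‖(⟨colM j, hmem j⟩ : U)‖ ^ 2 := by rw [LinearIsometryEquiv.norm_map]
      _ = ‖colM j‖ ^ 2 := by rw [Submodule.coe_norm]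
      _ = ∑ i, M i j ^ 2 := by
          rw [EuclideanSpace.norm_eq, Real.sq_sqrt (by positivity)]
          simp [hcolM, Real.norm_eq_abs, sq_abs]
  -- expansion of the inner product of columns
  have hexp : ∀ j, ∑ i, M i j * N i j = ∑ k, c k j * g k j := by
    intro j
    have h0 : colM j = ∑ k, c k j • ((ob k : U) : EuclideanSpace ℝ (Fin n)) := by
      have h := congrArg (Subtype.val) (ob.sum_repr' ⟨colM j, hmem j⟩)
      simp only [AddSubmonoidClass.coe_finset_sum, SetLike.val_smul] at h
      exact h.symm
    calc ∑ i, M i j * N i j = ⟪colM j, colN j⟫_ℝ := by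
          simp [PiLp.inner_apply, RCLike.inner_apply, conj_trivial, hcolM, hcolN]
          exact Finset.sum_congr rfl fun i _ => mul_comm _ _
      _ = ∑ k, c k j * g k j := by
          rw [h0, sum_inner]
          exact Finset.sum_congr rfl fun k _ => real_inner_smul_left _ _ _
  -- bound on N columns paired with each basis vector
  have hg : ∀ k, Real.sqrt (∑ j, g k j ^ 2) ≤ specNorm N := by
    intro k
    have hvk : eL (fun j => g k j) = Matrix.toEuclideanCLM (𝕜 := ℝ) Nᵀ ((ob k : U) : EuclideanSpace ℝ (Fin n)) := by
      have h : Matrix.toEuclideanCLM (𝕜 := ℝ) Nᵀ ((ob k : U) : EuclideanSpace ℝ (Fin n)) =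
          eL (Nᵀ *ᵥ (WithLp.equiv 2 _) ((ob k : U) : EuclideanSpace ℝ (Fin n))) := rfl
      rw [h]
      refine congrArg _ ?_
      funext jj
      simp only [g, PiLp.inner_apply, RCLike.inner_apply, conj_trivial, Matrix.toLin'_apply,
        Matrix.mulVec, dotProduct, Matrix.transpose_apply, hcolN]
      exact Finset.sum_congr rfl fun i _ => by rfl
    have hnorm1 : ‖((ob k : U) : EuclideanSpace ℝ (Fin n))‖ = 1 := by
      have h := ob.orthonormal.1 k
      rwa [Submodule.coe_norm] at h
    have h2 : ‖Matrix.toEuclideanCLM (𝕜 := ℝ) Nᵀ ((ob k : U) : EuclideanSpace ℝ (Fin n))‖ ≤ specNorm N := by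
      have h := (Matrix.toEuclideanCLM (𝕜 := ℝ) Nᵀ).le_opNorm ((ob k : U) : EuclideanSpace ℝ (Fin n))
      rw [hnorm1, mul_one] at h
      exact h.trans_eq (specNorm_transpose N)
    calc Real.sqrt (∑ j, g k j ^ 2) = ‖eL (fun j => g k j)‖ := by
          rw [EuclideanSpace.norm_eq]
          simp [heL, Real.norm_eq_abs, sq_abs]
      _ ≤ specNorm N := hvk ▸ h2
  -- per-k Cauchy-Schwarz
  have hck : ∀ k, ∑ j, c k j * g k j ≤ Real.sqrt (∑ j, c k j ^ 2) * specNorm N := by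
    intro k
    refine (Real.sum_mul_le_sqrt_mul_sqrt _ _ _).trans ?_
    exact mul_le_mul_of_nonneg_left (hg k) (Real.sqrt_nonneg _)
  -- sum over k Cauchy-Schwarz
  have hsum : ∑ k, Real.sqrt (∑ j, c k j ^ 2) ≤ Real.sqrt r * frobNorm M := by
    have h := Real.sum_mul_le_sqrt_mul_sqrt Finset.univ (fun _ : Fin r => (1 : ℝ))
      (fun k => Real.sqrt (∑ j, c k j ^ 2))
    simp only [one_mul, one_pow] at h
    have h1 : ∑ k : Fin r, (1 : ℝ) = (r : ℝ) := by simp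
    have h2 : ∑ k : Fin r, Real.sqrt (∑ j, c k j ^ 2) ^ 2 = ∑ i, ∑ j, M i j ^ 2 := by
      calc ∑ k : Fin r, Real.sqrt (∑ j, c k j ^ 2) ^ 2 = ∑ k : Fin r, ∑ j, c k j ^ 2 := by
            refine Finset.sum_congr rfl fun k _ => Real.sq_sqrt (by positivity)
        _ = ∑ j, ∑ k : Fin r, c k j ^ 2 := Finset.sum_comm
        _ = ∑ j, ∑ i, M i j ^ 2 := Finset.sum_congr rfl fun j _ => hpar j
        _ = ∑ i, ∑ j, M i j ^ 2 := Finset.sum_comm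
    rw [h1, h2] at h
    exact h.trans_eq (by rw [frobNorm])
  calc ∑ i, ∑ j, M i j * N i j = ∑ j, ∑ i, M i j * N i j := Finset.sum_comm
    _ = ∑ j, ∑ k, c k j * g k j := Finset.sum_congr rfl fun j _ => hexp j
    _ = ∑ k, ∑ j, c k j * g k j := Finset.sum_comm
    _ ≤ ∑ k, Real.sqrt (∑ j, c k j ^ 2) * specNorm N := Finset.sum_le_sum fun k _ => hck k
    _ = (∑ k, Real.sqrt (∑ j, c k j ^ 2)) * specNorm N := by rw [← Finset.sum_mul]
    _ ≤ (Real.sqrt r * frobNorm M) * specNorm N :=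
        mul_le_mul_of_nonneg_right hsum (specNorm_nonneg N)
    _ = Real.sqrt M.rank * specNorm N * frobNorm M := by rw [← hrU]; ring

lemma matrix_rank_sub_le {n : ℕ} (X Y : Matrix (Fin n) (Fin n) ℝ) :
    (X - Y).rank ≤ X.rank + Y.rank := by
  rw [Matrix.rank, Matrix.rank, Matrix.rank]
  have hle : LinearMap.range (X - Y).mulVecLin ≤
      LinearMap.range X.mulVecLin ⊔ LinearMap.range Y.mulVecLin := by
    rintro x ⟨y, rfl⟩
    have : (X - Y).mulVecLin y = X.mulVecLin y - Y.mulVecLin y := by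
      simp [Matrix.mulVecLin_apply, Matrix.sub_mulVec]
    rw [this]
    exact sub_mem (Submodule.mem_sup_left (LinearMap.mem_range_self _ _))
      (Submodule.mem_sup_right (LinearMap.mem_range_self _ _))
  exact (Submodule.finrank_mono hle).trans
    (Submodule.finrank_add_le_finrank_add_finrank _ _)

/-- If `rank B ≤ 2`, `rank P̂ ≤ 2` and `‖P̂ − A‖_F ≤ ‖B − A‖_F`, then
`‖P̂ − B‖_F ≤ (8/√3)‖A − B‖₂`. -/
theorem frobenius_error_bound_of_low_rank_projection (n : ℕ)
    (A B Phat : Matrix (Fin n) (Fin n) ℝ) (hBrank : B.rank ≤ 2) (hPrank : Phat.rank ≤ 2)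
    (hproj : frobNorm (Phat - A) ≤ frobNorm (B - A)) :
    frobNorm (Phat - B) ≤ (8 / Real.sqrt 3) * specNorm (A - B) := by
  set M := Phat - B with hM
  set D := A - B with hD
  have hrank : (M.rank : ℝ) ≤ 4 := by
    have h := matrix_rank_sub_le Phat B
    have : M.rank ≤ 4 := h.trans (by omega)
    exact_mod_cast this
  -- step 1 : frobNorm M ^ 2 ≤ 2 * ∑∑ M D
  have hsq : frobNorm (Phat - A) ^ 2 ≤ frobNorm (B - A) ^ 2 :=
    pow_le_pow_left₀ (frobNorm_nonneg _) hproj 2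
  rw [frobNorm_sq, frobNorm_sq] at hsq
  have hexpand : ∑ i, ∑ j, ((Phat - A) i j) ^ 2 =
      (∑ i, ∑ j, (M i j) ^ 2) - 2 * (∑ i, ∑ j, M i j * D i j) + ∑ i, ∑ j, (D i j) ^ 2 := by
    rw [Finset.mul_sum, ← Finset.sum_sub_distrib, ← Finset.sum_add_distrib]
    refine Finset.sum_congr rfl fun i _ => ?_
    rw [Finset.mul_sum, ← Finset.sum_sub_distrib, ← Finset.sum_add_distrib]
    refine Finset.sum_congr rfl fun j _ => ?_
    simp only [hM, hD, Matrix.sub_apply]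
    ring
  have hBA : ∑ i, ∑ j, ((B - A) i j) ^ 2 = ∑ i, ∑ j, (D i j) ^ 2 := by
    refine Finset.sum_congr rfl fun i _ => Finset.sum_congr rfl fun j _ => ?_
    simp only [hD, Matrix.sub_apply]
    ring
  have hstep1 : ∑ i, ∑ j, (M i j) ^ 2 ≤ 2 * ∑ i, ∑ j, M i j * D i j := by
    rw [hexpand, hBA] at hsq
    linarith
  -- step 2 : apply the key lemma
  have hkey := sum_mul_le_sqrt_rank_spec_frob M D
  have hsqrt4 : Real.sqrt (M.rank : ℝ) ≤ 2 := by
    have h1 : Real.sqrt (M.rank : ℝ) ≤ Real.sqrt 4 := Real.sqrt_le_sqrt hrank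
    have h2 : Real.sqrt 4 = 2 := by
      rw [show (4 : ℝ) = 2 ^ 2 by norm_num, Real.sqrt_sq (by norm_num)]
    linarith
  have hfrob2 : frobNorm M ^ 2 ≤ 4 * specNorm D * frobNorm M := by
    rw [frobNorm_sq]
    calc ∑ i, ∑ j, (M i j) ^ 2 ≤ 2 * ∑ i, ∑ j, M i j * D i j := hstep1
      _ ≤ 2 * (Real.sqrt M.rank * specNorm D * frobNorm M) := by linarith [hkey]
      _ ≤ 4 * specNorm D * frobNorm M := by
          have hsf : (0 : ℝ) ≤ specNorm D * frobNorm M :=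
            mul_nonneg (specNorm_nonneg D) (frobNorm_nonneg M)
          have := mul_le_mul_of_nonneg_right hsqrt4 hsf
          nlinarith [this]
  have h483 : (4 : ℝ) ≤ 8 / Real.sqrt 3 := by
    have h3 : Real.sqrt 3 ≤ 2 := by
      have : Real.sqrt 3 ≤ Real.sqrt 4 := Real.sqrt_le_sqrt (by norm_num)
      rw [show (4 : ℝ) = 2 ^ 2 by norm_num, Real.sqrt_sq (by norm_num)] at this
      exact this
    have h3pos : (0 : ℝ) < Real.sqrt 3 := Real.sqrt_pos.2 (by norm_num)
    rw [le_div_iff₀ h3pos]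
    nlinarith
  have hfrob : frobNorm M ≤ 4 * specNorm D := by
    rcases eq_or_lt_of_le (frobNorm_nonneg M) with h0 | h0
    · rw [← h0]
      exact mul_nonneg (by norm_num) (specNorm_nonneg D)
    · nlinarith [hfrob2]
  calc frobNorm M ≤ 4 * specNorm D := hfrob
    _ ≤ (8 / Real.sqrt 3) * specNorm D :=
        mul_le_mul_of_nonneg_right h483 (specNorm_nonneg D)
end

section
/- Let n₁, n₂ ≥ 1 and n = n₁ + n₂, with community labels σ_i = 1 for 1 ≤ i ≤ n₁ and σ_i = 2 for n₁ < i ≤ n. Let α ∈ ℝ^n and 0 < ξ₋ < ξ₊. Define the n×n matrix B by B_{ij} = e^{α_i+α_j} ξ₊ if σ_i = σ_j and B_{ij} = e^{α_i+α_j} ξ₋ otherwise, set L_u = Σ_{i: σ_i = u} e^{α_i} for u = 1, 2, and let B̄_i = B_i / ‖B_i‖₁ be the ℓ¹-normalized i-th row of B. Suppose there are constants ω̲ ∈ ℝ and L̄ > 0 such that min(L₁, L₂) ≥ (n/3) e^{−ω̲} and L₁ + L₂ ≤ n L̄. Then for all i, j with σ_i ≠ σ_j, ‖B̄_i − B̄_j‖₁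 ≥ (ξ₊ − ξ₋) / (3 e^{ω̲} L̄ ξ₊). -/
/-- The ℓ¹ norm on `ℝ^n`. -/
def l1norm {n : ℕ} (x : Fin n → ℝ) : ℝ := ∑ k, |x k|

set_option maxHeartbeats 2000000 in
theorem aux_sep (n₁ n₂ : ℕ) (h₁ : 1 ≤ n₁) (h₂ : 1 ≤ n₂)
    (α : Fin (n₁ + n₂) → ℝ) (ξm ξp : ℝ) (hξm : 0 < ξm) (hξ : ξm < ξp)
    (B : Matrix (Fin (n₁ + n₂)) (Fin (n₁ + n₂)) ℝ)
    (hB : ∀ i j, B i j = Real.exp (α i + α j) *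
      (if (((i : ℕ) < n₁) ↔ ((j : ℕ) < n₁)) then ξp else ξm))
    (L₁ L₂ : ℝ)
    (hL₁ : L₁ = ∑ i ∈ Finset.univ.filter (fun i : Fin (n₁ + n₂) => (i : ℕ) < n₁),
      Real.exp (α i))
    (hL₂ : L₂ = ∑ i ∈ Finset.univ.filter (fun i : Fin (n₁ + n₂) => ¬ (i : ℕ) < n₁),
      Real.exp (α i))
    (ω : ℝ) (Lbar : ℝ) (hLbar : 0 < Lbar)
    (hmin : ((n₁ + n₂ : ℕ) : ℝ) / 3 * Real.exp (-ω) ≤ min L₁ L₂)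
    (hsum : L₁ + L₂ ≤ ((n₁ + n₂ : ℕ) : ℝ) * Lbar)
    (i j : Fin (n₁ + n₂)) (hi : (i : ℕ) < n₁) (hj : ¬ (j : ℕ) < n₁) :
    (ξp - ξm) / (3 * Real.exp ω * Lbar * ξp) ≤
      l1norm ((l1norm (B i))⁻¹ • B i - (l1norm (B j))⁻¹ • B j) := by
  have hξp : 0 < ξp := hξm.trans hξ
  have hn : (0:ℝ) < ((n₁ + n₂ : ℕ) : ℝ) := by
    have : 0 < n₁ + n₂ := by omega
    exact_mod_cast this
  have hmpos : 0 < min L₁ L₂ := lt_of_lt_of_le (by positivity) hmin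
  have hL₁pos : 0 < L₁ := lt_of_lt_of_le hmpos (min_le_left _ _)
  have hL₂pos : 0 < L₂ := lt_of_lt_of_le hmpos (min_le_right _ _)
  set S₁ := ξp * L₁ + ξm * L₂ with hS₁def
  set S₂ := ξm * L₁ + ξp * L₂ with hS₂def
  clear_value S₁ S₂
  have hS₁pos : 0 < S₁ := by rw [hS₁def]; positivity
  have hS₂pos : 0 < S₂ := by rw [hS₂def]; positivity
  -- row norms
  have hnormi : l1norm (B i) = Real.exp (α i) * S₁ := by
    unfold l1norm
    have habs : ∀ k : Fin (n₁ + n₂), |B i k| =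
        Real.exp (α i) * (if (k : ℕ) < n₁ then Real.exp (α k) * ξp else Real.exp (α k) * ξm) := by
      intro k
      rw [hB, Real.exp_add]
      by_cases hk : (k : ℕ) < n₁
      · rw [if_pos (iff_of_true hi hk), if_pos hk, abs_of_pos (by positivity)]; ring
      · rw [if_neg (fun h => hk (h.mp hi)), if_neg hk, abs_of_pos (by positivity)]; ring
    simp_rw [habs]
    rw [← Finset.mul_sum, Finset.sum_ite, ← Finset.sum_mul, ← Finset.sum_mul, ← hL₁, ← hL₂,
      hS₁def]
    ring
  have hnormj : l1norm (B j) = Real.exp (α j) * S₂ := by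
    unfold l1norm
    have habs : ∀ k : Fin (n₁ + n₂), |B j k| =
        Real.exp (α j) * (if (k : ℕ) < n₁ then Real.exp (α k) * ξm else Real.exp (α k) * ξp) := by
      intro k
      rw [hB, Real.exp_add]
      by_cases hk : (k : ℕ) < n₁
      · rw [if_neg (fun h => hj (h.mpr hk)), if_pos hk, abs_of_pos (by positivity)]; ring
      · rw [if_pos (iff_of_false hj hk), if_neg hk, abs_of_pos (by positivity)]; ring
    simp_rw [habs]
    rw [← Finset.mul_sum, Finset.sum_ite, ← Finset.sum_mul, ← Finset.sum_mul, ← hL₁, ← hL₂,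
      hS₂def]
    ring
  have hei : Real.exp (α i) ≠ 0 := (Real.exp_pos _).ne'
  have hej : Real.exp (α j) ≠ 0 := (Real.exp_pos _).ne'
  have hξsq : 0 < ξp ^ 2 - ξm ^ 2 := by nlinarith
  have hA : ξm / S₂ ≤ ξp / S₁ := by
    rw [div_le_div_iff₀ hS₂pos hS₁pos]
    have h2 : ξp * S₂ - ξm * S₁ = (ξp ^ 2 - ξm ^ 2) * L₂ := by
      rw [hS₁def, hS₂def]; ring
    nlinarith [mul_pos hξsq hL₂pos]
  have hBle : ξm / S₁ ≤ ξp / S₂ := by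
    rw [div_le_div_iff₀ hS₁pos hS₂pos]
    have h2 : ξp * S₁ - ξm * S₂ = (ξp ^ 2 - ξm ^ 2) * L₁ := by
      rw [hS₁def, hS₂def]; ring
    nlinarith [mul_pos hξsq hL₁pos]
  -- the l1 norm of the difference
  have hnd : l1norm ((l1norm (B i))⁻¹ • B i - (l1norm (B j))⁻¹ • B j) =
      L₁ * (ξp / S₁ - ξm / S₂) + L₂ * (ξp / S₂ - ξm / S₁) := by
    rw [hnormi, hnormj]
    unfold l1norm
    have habs : ∀ k : Fin (n₁ + n₂),
        |((Real.exp (α i) * S₁)⁻¹ • B i - (Real.exp (α j) * S₂)⁻¹ • B j) k| =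
        (if (k : ℕ) < n₁ then Real.exp (α k) * (ξp / S₁ - ξm / S₂)
          else Real.exp (α k) * (ξp / S₂ - ξm / S₁)) := by
      intro k
      simp only [Pi.sub_apply, Pi.smul_apply, smul_eq_mul]
      rw [hB, hB, Real.exp_add, Real.exp_add]
      by_cases hk : (k : ℕ) < n₁
      · rw [if_pos (iff_of_true hi hk), if_neg (fun h => hj (h.mpr hk)), if_pos hk]
        rw [abs_of_nonneg (by
          have : (Real.exp (α i) * S₁)⁻¹ * (Real.exp (α i) * Real.exp (α k) * ξp) -
              (Real.exp (α j) * S₂)⁻¹ * (Real.exp (α j) * Real.exp (α k) * ξm) =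
              Real.exp (α k) * (ξp / S₁ - ξm / S₂) := by
            field_simp
          rw [this]
          have : (0:ℝ) ≤ ξp / S₁ - ξm / S₂ := by linarith
          positivity)]
        field_simp
      · rw [if_neg (fun h => hk (h.mp hi)), if_pos (iff_of_false hj hk), if_neg hk]
        have heq : (Real.exp (α i) * S₁)⁻¹ * (Real.exp (α i) * Real.exp (α k) * ξm) -
            (Real.exp (α j) * S₂)⁻¹ * (Real.exp (α j) * Real.exp (α k) * ξp) =
            -(Real.exp (α k) * (ξp / S₂ - ξm / S₁)) := by
          field_simp
          ring
        rw [heq, abs_neg, abs_of_nonneg (by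
          have : (0:ℝ) ≤ ξp / S₂ - ξm / S₁ := by linarith
          positivity)]
    rw [Finset.sum_congr rfl (fun k _ => habs k)]
    rw [Finset.sum_ite, ← Finset.sum_mul, ← Finset.sum_mul, ← hL₁, ← hL₂]
  rw [hnd]
  -- final inequality
  have hEq : L₁ * (ξp / S₁ - ξm / S₂) + L₂ * (ξp / S₂ - ξm / S₁) =
      2 * (ξp ^ 2 - ξm ^ 2) * (L₁ * L₂) / (S₁ * S₂) := by
    have h1 : ξp / S₁ - ξm / S₂ = (ξp ^ 2 - ξm ^ 2) * L₂ / (S₁ * S₂) := by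
      rw [div_sub_div _ _ hS₁pos.ne' hS₂pos.ne']
      congr 1
      rw [hS₁def, hS₂def]; ring
    have h2 : ξp / S₂ - ξm / S₁ = (ξp ^ 2 - ξm ^ 2) * L₁ / (S₁ * S₂) := by
      rw [div_sub_div _ _ hS₂pos.ne' hS₁pos.ne', mul_comm S₂ S₁]
      congr 1
      rw [hS₁def, hS₂def]; ring
    rw [h1, h2, mul_div_assoc', mul_div_assoc', ← add_div]
    congr 1
    ring
  rw [hEq]
  clear hnd hEq hnormi hnormj hei hej hA hBle hB hL₁ hL₂ hi hj
  clear B α i j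
  set m := min L₁ L₂ with hm
  clear_value m
  have hmL₁ : m ≤ L₁ := hm ▸ min_le_left _ _
  have hmL₂ : m ≤ L₂ := hm ▸ min_le_right _ _
  have hS₁le : S₁ ≤ ξp * (L₁ + L₂) := by rw [hS₁def]; nlinarith
  have hS₂le : S₂ ≤ ξp * (L₁ + L₂) := by rw [hS₂def]; nlinarith
  have hSS : S₁ * S₂ ≤ (ξp * (L₁ + L₂)) ^ 2 := by
    nlinarith [mul_le_mul hS₁le hS₂le hS₂pos.le (by positivity : (0:ℝ) ≤ ξp * (L₁ + L₂))]
  have hLL : m * (L₁ + L₂) / 2 ≤ L₁ * L₂ := by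
    rcases le_total L₁ L₂ with h | h
    · rw [hm, min_eq_left h]; nlinarith
    · rw [hm, min_eq_right h]; nlinarith
  have hEexp : Real.exp (-ω) * Real.exp ω = 1 := by
    rw [← Real.exp_add]; simp
  have hLsum : 0 < L₁ + L₂ := by linarith
  calc (ξp - ξm) / (3 * Real.exp ω * Lbar * ξp)
      ≤ (ξp ^ 2 - ξm ^ 2) * (((n₁ + n₂ : ℕ) : ℝ) / 3 * Real.exp (-ω)) /
        (ξp ^ 2 * (((n₁ + n₂ : ℕ) : ℝ) * Lbar)) := by
        rw [div_le_div_iff₀ (by positivity) (by positivity)]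
        have key : ((n₁ + n₂ : ℕ) : ℝ) / 3 * Real.exp (-ω) * (3 * Real.exp ω * Lbar * ξp) =
            ((n₁ + n₂ : ℕ) : ℝ) * Lbar * ξp := by
          linear_combination ((n₁ + n₂ : ℕ) : ℝ) * Lbar * ξp * hEexp
        rw [mul_assoc, key]
        nlinarith [mul_nonneg (mul_nonneg (mul_nonneg hn.le hLbar.le) hξp.le)
          (mul_nonneg hξm.le (sub_pos.mpr hξ).le)]
    _ ≤ (ξp ^ 2 - ξm ^ 2) * m / (ξp ^ 2 * (L₁ + L₂)) := by
        gcongr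
    _ = 2 * (ξp ^ 2 - ξm ^ 2) * (m * (L₁ + L₂) / 2) / ((ξp * (L₁ + L₂)) ^ 2) := by
        field_simp
    _ ≤ 2 * (ξp ^ 2 - ξm ^ 2) * (L₁ * L₂) / (S₁ * S₂) := by
        gcongr

/-- Separation of the ℓ¹-normalized rows of the two-block matrix
`B_{ij} = e^{α_i+α_j} ξ₊` (same community) / `e^{α_i+α_j} ξ₋` (different communities):
under `min(L₁, L₂) ≥ (n/3)e^{−ω̲}` and `L₁ + L₂ ≤ n L̄`, for `i, j` in different communities,
`‖B̄_i − B̄_j‖₁ ≥ (ξ₊ − ξ₋)/(3 e^{ω̲} L̄ ξ₊)`. -/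
theorem normalized_row_separation (n₁ n₂ : ℕ) (h₁ : 1 ≤ n₁) (h₂ : 1 ≤ n₂)
    (α : Fin (n₁ + n₂) → ℝ) (ξm ξp : ℝ) (hξm : 0 < ξm) (hξ : ξm < ξp)
    (B : Matrix (Fin (n₁ + n₂)) (Fin (n₁ + n₂)) ℝ)
    (hB : ∀ i j, B i j = Real.exp (α i + α j) *
      (if (((i : ℕ) < n₁) ↔ ((j : ℕ) < n₁)) then ξp else ξm))
    (L₁ L₂ : ℝ)
    (hL₁ : L₁ = ∑ i ∈ Finset.univ.filter (fun i : Fin (n₁ + n₂) => (i : ℕ) < n₁),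
      Real.exp (α i))
    (hL₂ : L₂ = ∑ i ∈ Finset.univ.filter (fun i : Fin (n₁ + n₂) => ¬ (i : ℕ) < n₁),
      Real.exp (α i))
    (ω : ℝ) (Lbar : ℝ) (hLbar : 0 < Lbar)
    (hmin : ((n₁ + n₂ : ℕ) : ℝ) / 3 * Real.exp (-ω) ≤ min L₁ L₂)
    (hsum : L₁ + L₂ ≤ ((n₁ + n₂ : ℕ) : ℝ) * Lbar)
    (i j : Fin (n₁ + n₂)) (hij : ¬ (((i : ℕ) < n₁) ↔ ((j : ℕ) < n₁))) :
    (ξp - ξm) / (3 * Real.exp ω * Lbar * ξp) ≤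
      l1norm ((l1norm (B i))⁻¹ • B i - (l1norm (B j))⁻¹ • B j) := by
  by_cases hi : (i : ℕ) < n₁
  · have hj : ¬ (j : ℕ) < n₁ := fun hj => hij (iff_of_true hi hj)
    exact aux_sep n₁ n₂ h₁ h₂ α ξm ξp hξm hξ B hB L₁ L₂ hL₁ hL₂ ω Lbar hLbar hmin hsum i j hi hj
  · have hj : (j : ℕ) < n₁ := by
      by_contra hj
      exact hij (iff_of_false hi hj)
    have hsym : l1norm ((l1norm (B i))⁻¹ • B i - (l1norm (B j))⁻¹ • B j) =
        l1norm ((l1norm (B j))⁻¹ • B j - (l1norm (B i))⁻¹ • B i) := by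
      unfold l1norm
      apply Finset.sum_congr rfl
      intro k _
      simp [Pi.sub_apply, abs_sub_comm]
    rw [hsym]
    exact aux_sep n₁ n₂ h₁ h₂ α ξm ξp hξm hξ B hB L₁ L₂ hL₁ hL₂ ω Lbar hLbar hmin hsum j i hj hi
end

section
/- Let d ≥ 1, μ ∈ ℝ^d, τ > 0, η > 0, and let z ~ N(μ, τ² I_d). If (η/τ)² ≥ d + 2√(d · η²/(4τ²)) + η²/(2τ²), then P(‖z − μ‖₂ > η) ≤ exp(−η²/(4τ²)). -/
open MeasureTheory ProbabilityTheory

open scoped ENNReal NNReal Real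

-- key polynomial/log inequality
lemma key_log_ineq' (r : ℝ) (h : 2 + 2 * Real.sqrt r ≤ r) : Real.log r ≤ r / 2 - 1 := by
  have hs0 : 0 ≤ Real.sqrt r := Real.sqrt_nonneg r
  have hr2 : (2:ℝ) ≤ r := by nlinarith
  have hr0 : (0:ℝ) < r := by linarith
  set s := Real.sqrt r with hs
  have hs2 : s ^ 2 = r := Real.sq_sqrt hr0.le
  have hs1 : (1:ℝ) ≤ s := by nlinarith
  set p := Real.sqrt s with hp
  have hp0 : 0 < s := by linarith
  have hp2 : p ^ 2 = s := Real.sq_sqrt hp0.le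
  have hp1 : (1:ℝ) ≤ p := by
    rw [hp]; exact Real.one_le_sqrt.mpr hs1
  have hlog : Real.log r = 4 * Real.log p := by
    rw [hp, Real.log_sqrt hp0.le, hs, Real.log_sqrt hr0.le]; ring
  have hle : Real.log p ≤ p - 1 := Real.log_le_sub_one_of_pos (by linarith)
  have hcond : 2 + 2 * p ^ 2 ≤ p ^ 2 * p ^ 2 := by
    rw [hp2]; nlinarith
  have key : 8 * p ≤ p^2 * p^2 + 6 := by nlinarith [sq_nonneg (p - 1), sq_nonneg (p^2 - p - 1), sq_nonneg (p^2 - 2*p), sq_nonneg (p - 2), mul_nonneg (sq_nonneg (p-1)) (by linarith : (0:ℝ) ≤ p)]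
  calc Real.log r = 4 * Real.log p := hlog
    _ ≤ 4 * (p - 1) := by linarith
    _ ≤ r / 2 - 1 := by nlinarith [hs2, hp2]

lemma lintegral_exp_mul_sq_gaussianReal' (m v t : ℝ) (hv : 0 < v) (ht : t < (2*v)⁻¹) :
    ∫⁻ x, ENNReal.ofReal (Real.exp (t * (x - m)^2)) ∂(gaussianReal m (Real.toNNReal v))
      = ENNReal.ofReal ((Real.sqrt (1 - 2*t*v))⁻¹) := by
  have hv' : Real.toNNReal v ≠ 0 := by
    simp [Real.toNNReal_eq_zero, not_le, hv]
  have hvne : v ≠ 0 := ne_of_gt hv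
  set c : ℝ := (2*v)⁻¹ - t with hc
  have hcpos : 0 < c := sub_pos.mpr ht
  have hcoe := Real.coe_toNNReal v hv.le
  rw [gaussianReal_of_var_ne_zero m hv',
    lintegral_withDensity_eq_lintegral_mul _ (measurable_gaussianPDF _ _)
      (by measurability)]
  have hpw : ∀ x : ℝ, (gaussianPDF m (Real.toNNReal v) * fun x => ENNReal.ofReal (Real.exp (t * (x - m)^2))) x
      = ENNReal.ofReal ((Real.sqrt (2 * π * v))⁻¹ * Real.exp (-c * (x - m)^2)) := by
    intro x
    simp only [Pi.mul_apply, gaussianPDF, gaussianPDFReal, hcoe]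
    rw [← ENNReal.ofReal_mul (by positivity)]
    congr 1
    rw [mul_assoc, ← Real.exp_add]
    congr 2
    rw [hc, div_eq_mul_inv]
    ring
  simp_rw [hpw]
  rw [← ofReal_integral_eq_lintegral_ofReal
    (((integrable_exp_neg_mul_sq hcpos).comp_sub_right m).const_mul _)
    (Filter.Eventually.of_forall fun x => by positivity)]
  congr 1
  rw [MeasureTheory.integral_const_mul]
  rw [integral_sub_right_eq_self (fun x => Real.exp (-c * x^2)) m]
  rw [integral_gaussian]
  rw [← Real.sqrt_inv, ← Real.sqrt_inv, ← Real.sqrt_mul (by positivity)]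
  congr 1
  have h2vc : 1 - 2*t*v = 2*v*c := by rw [hc]; field_simp
  rw [h2vc]
  field_simp

theorem lintegral_pi_prod' {n : ℕ} {α : Fin n → Type} [∀ i, MeasurableSpace (α i)]
    (μ : ∀ i, Measure (α i)) [∀ i, SigmaFinite (μ i)] (f : ∀ i, α i → ℝ≥0∞)
    (hf : ∀ i, Measurable (f i)) :
    ∫⁻ x, ∏ i, f i (x i) ∂Measure.pi μ = ∏ i, ∫⁻ x, f i x ∂μ i := by
  induction n with
  | zero => simp [Measure.pi_univ]
  | succ n ih =>
    have hmp := (measurePreserving_piFinSuccAbove μ 0).symm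
    have hF : Measurable fun x : ∀ i, α i => ∏ i, f i (x i) :=
      Finset.measurable_prod _ fun i _ => (hf i).comp (measurable_pi_apply i)
    rw [← hmp.lintegral_comp hF]
    have heq : ∀ p : α 0 × ∀ j : Fin n, α ((0 : Fin (n+1)).succAbove j),
        (∏ i, f i (((MeasurableEquiv.piFinSuccAbove α 0).symm p) i))
          = f 0 p.1 * ∏ j, f ((0 : Fin (n+1)).succAbove j) (p.2 j) := by
      intro p
      rw [Fin.prod_univ_succAbove _ 0]
      simp [MeasurableEquiv.piFinSuccAbove]
      rfl
    simp_rw [heq]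
    rw [lintegral_prod_mul (f := f 0)
      (g := fun y : ∀ j : Fin n, α ((0 : Fin (n+1)).succAbove j) =>
        ∏ j, f ((0 : Fin (n+1)).succAbove j) (y j)) ((hf 0).aemeasurable)
      ((Finset.measurable_prod _ fun j _ => (hf _).comp (measurable_pi_apply j)).aemeasurable)]
    rw [ih (fun j => μ ((0 : Fin (n+1)).succAbove j)) (fun j => f _) (fun j => hf _)]
    rw [Fin.prod_univ_succAbove (fun i => ∫⁻ x, f i x ∂μ i) 0]

lemma final_real_ineq (d : ℕ) (hd : 1 ≤ d) (v η t r : ℝ) (hv : 0 < v) (hη : 0 < η)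
    (hrdef : η ^ 2 = d * r * v) (htdef : t = (2 * v)⁻¹ - (d : ℝ) / (2 * η ^ 2))
    (hr : 2 + 2 * Real.sqrt r ≤ r) :
    (Real.sqrt (1 - 2 * t * v))⁻¹ ^ d / Real.exp (t * η ^ 2)
      ≤ Real.exp (-(η ^ 2) / (4 * v)) := by
  have hr0 : (0 : ℝ) < r := by nlinarith [Real.sqrt_nonneg r]
  have hd0 : (0 : ℝ) < d := by exact_mod_cast hd
  have hD : 1 - 2 * t * v = r⁻¹ := by
    rw [htdef, hrdef]; field_simp; ring
  have hR : (Real.sqrt (1 - 2 * t * v))⁻¹ = Real.exp (Real.log r / 2) := by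
    rw [hD, Real.sqrt_inv, inv_inv, ← Real.log_sqrt hr0.le,
      Real.exp_log (Real.sqrt_pos.mpr hr0)]
  have hRd : (Real.sqrt (1 - 2 * t * v))⁻¹ ^ d = Real.exp (d * (Real.log r / 2)) := by
    rw [hR, ← Real.exp_nat_mul]
  rw [hRd, ← Real.exp_sub]
  rw [Real.exp_le_exp]
  have ht_eta : t * η ^ 2 = (d : ℝ) * r / 2 - (d : ℝ) / 2 := by
    rw [htdef]
    have h2 : ((2 * v)⁻¹ - (d : ℝ) / (2 * η ^ 2)) * η ^ 2
        = η ^ 2 / (2 * v) - (d : ℝ) / 2 := by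
      field_simp
    rw [h2, hrdef]
    field_simp
  have hrhs : -(η ^ 2) / (4 * v) = -((d : ℝ) * r) / 4 := by
    rw [hrdef]; field_simp
  rw [ht_eta, hrhs]
  nlinarith [key_log_ineq' r hr, hd0]

/-- Gaussian norm tail bound: for `z ~ N(μ, τ² I_d)`, if
`(η/τ)² ≥ d + 2√(d η²/(4τ²)) + η²/(2τ²)` then `P(‖z − μ‖ > η) ≤ exp(−η²/(4τ²))`. -/
theorem gaussian_norm_tail_bound (d : ℕ) (hd : 1 ≤ d) (μ : EuclideanSpace ℝ (Fin d))
    (τ η : ℝ) (hτ : 0 < τ) (hη : 0 < η)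
    (hcond : (d : ℝ) + 2 * Real.sqrt ((d : ℝ) * η ^ 2 / (4 * τ ^ 2)) + η ^ 2 / (2 * τ ^ 2)
      ≤ (η / τ) ^ 2) :
    gaussianPi d μ τ {z : EuclideanSpace ℝ (Fin d) | η < ‖z - μ‖} ≤
      ENNReal.ofReal (Real.exp (-(η ^ 2) / (4 * τ ^ 2))) := by
  classical
  set v : ℝ := τ ^ 2 with hvdef
  have hv : 0 < v := by positivity
  have hd0 : (0 : ℝ) < d := by exact_mod_cast hd
  set r : ℝ := η ^ 2 / (v * d) with hrdef'
  have hrdef : η ^ 2 = d * r * v := by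
    rw [hrdef']; field_simp
  have hr0 : 0 < r := by rw [hrdef']; positivity
  -- derive the condition 2 + 2 √r ≤ r
  have hr : 2 + 2 * Real.sqrt r ≤ r := by
    have hsq : Real.sqrt ((d : ℝ) * η ^ 2 / (4 * v)) = ((d : ℝ) / 2) * Real.sqrt r := by
      have h1 : (d : ℝ) * η ^ 2 / (4 * v) = ((d : ℝ) / 2) ^ 2 * r := by
        rw [hrdef']; field_simp; ring
      rw [h1, Real.sqrt_mul (sq_nonneg _), Real.sqrt_sq (by positivity : (0:ℝ) ≤ (d : ℝ) / 2)]
    have hy : (η / τ) ^ 2 = (d : ℝ) * r := by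
      rw [div_pow, hrdef]
      field_simp
      exact hvdef
    have hhalf : η ^ 2 / (2 * v) = (d : ℝ) * r / 2 := by
      rw [hrdef]; field_simp
    rw [hsq, hy, hhalf] at hcond
    have h2 : (d : ℝ) * (2 + 2 * Real.sqrt r) ≤ (d : ℝ) * r := by nlinarith
    exact le_of_mul_le_mul_left h2 hd0
  have hr2 : (2 : ℝ) ≤ r := by nlinarith [Real.sqrt_nonneg r]
  -- the Chernoff parameter
  set t : ℝ := (2 * v)⁻¹ - (d : ℝ) / (2 * η ^ 2) with htdef
  have htlt : t < (2 * v)⁻¹ := by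
    rw [htdef]
    have : 0 < (d : ℝ) / (2 * η ^ 2) := by positivity
    linarith
  have ht0 : 0 < t := by
    rw [htdef, sub_pos, hrdef, inv_eq_one_div,
      div_lt_div_iff₀ (by positivity) (by positivity)]
    nlinarith
  -- the measure and event
  set π₀ : Measure (Fin d → ℝ) := Measure.pi fun i => gaussianReal (μ i) (Real.toNNReal v)
    with hπ₀
  have hS : MeasurableSet {z : EuclideanSpace ℝ (Fin d) | η < ‖z - μ‖} :=
    measurableSet_lt measurable_const ((measurable_id.sub_const μ).norm)
  set g : (Fin d → ℝ) → ℝ≥0∞ :=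
    fun x => ENNReal.ofReal (Real.exp (t * ∑ i, (x i - μ i) ^ 2)) with hgdef
  have hgmeas : Measurable g := by
    apply Measurable.ennreal_ofReal
    apply Real.measurable_exp.comp
    apply Measurable.const_mul
    exact Finset.measurable_sum _ fun i _ => ((measurable_pi_apply i).sub_const _).pow_const 2
  set ε : ℝ≥0∞ := ENNReal.ofReal (Real.exp (t * η ^ 2)) with hεdef
  have hε0 : ε ≠ 0 := by
    simp [hεdef, ENNReal.ofReal_eq_zero, not_le, Real.exp_pos]
  have hεtop : ε ≠ ∞ := ENNReal.ofReal_ne_top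
  -- rewrite the measure
  rw [gaussianPi, Measure.map_apply (MeasurableEquiv.measurable _) hS]
  have hsub : (MeasurableEquiv.toLp 2 (Fin d → ℝ)) ⁻¹'
      {z : EuclideanSpace ℝ (Fin d) | η < ‖z - μ‖} ⊆ {x | ε ≤ g x} := by
    intro x hx
    simp only [Set.mem_preimage, Set.mem_setOf_eq] at hx
    have hnorm : ‖(MeasurableEquiv.toLp 2 (Fin d → ℝ)) x - μ‖
        = Real.sqrt (∑ i, (x i - μ i) ^ 2) := by
      rw [EuclideanSpace.norm_eq]
      congr 1
      refine Finset.sum_congr rfl fun i _ => ?_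
      have : ((MeasurableEquiv.toLp 2 (Fin d → ℝ)) x - μ) i = x i - μ i := rfl
      rw [this, Real.norm_eq_abs, sq_abs]
    rw [hnorm] at hx
    have hlt : η ^ 2 < ∑ i, (x i - μ i) ^ 2 := (Real.lt_sqrt hη.le).mp hx
    simp only [Set.mem_setOf_eq, hgdef, hεdef]
    exact ENNReal.ofReal_le_ofReal (Real.exp_le_exp.mpr
      (mul_le_mul_of_nonneg_left hlt.le ht0.le))
  -- Markov inequality
  have markov : ε * π₀ {x | ε ≤ g x} ≤ ∫⁻ x, g x ∂π₀ :=
    mul_meas_ge_le_lintegral₀ hgmeas.aemeasurable ε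
  -- compute the lintegral
  have hint : ∫⁻ x, g x ∂π₀
      = ENNReal.ofReal ((Real.sqrt (1 - 2 * t * v))⁻¹ ^ d) := by
    have hprod : ∀ x : Fin d → ℝ, g x
        = ∏ i, (fun z : ℝ => ENNReal.ofReal (Real.exp (t * (z - μ i) ^ 2))) (x i) := by
      intro x
      rw [hgdef]
      simp only
      rw [Finset.mul_sum, Real.exp_sum, ENNReal.ofReal_prod_of_nonneg
        (fun i _ => (Real.exp_pos _).le)]
    simp_rw [hprod]
    rw [lintegral_pi_prod' (fun i => gaussianReal (μ i) (Real.toNNReal v))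
      (fun i => fun z : ℝ => ENNReal.ofReal (Real.exp (t * (z - μ i) ^ 2)))
      (fun i => (Real.measurable_exp.comp
        (((measurable_id.sub_const (μ i : ℝ)).pow_const 2).const_mul t)).ennreal_ofReal)]
    have : ∀ i : Fin d, ∫⁻ z, ENNReal.ofReal (Real.exp (t * (z - μ i) ^ 2))
        ∂(gaussianReal (μ i) (Real.toNNReal v))
        = ENNReal.ofReal ((Real.sqrt (1 - 2 * t * v))⁻¹) := fun i =>
      lintegral_exp_mul_sq_gaussianReal' (μ i) v t hv htlt
    simp_rw [this]
    rw [Finset.prod_const, Finset.card_univ, Fintype.card_fin,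
      ← ENNReal.ofReal_pow (by positivity)]
  -- put everything together
  calc π₀ ((MeasurableEquiv.toLp 2 (Fin d → ℝ)) ⁻¹'
        {z : EuclideanSpace ℝ (Fin d) | η < ‖z - μ‖})
      ≤ π₀ {x | ε ≤ g x} := measure_mono hsub
    _ ≤ (∫⁻ x, g x ∂π₀) / ε := by
        rw [ENNReal.le_div_iff_mul_le (Or.inl hε0) (Or.inl hεtop), mul_comm]
        exact markov
    _ = ENNReal.ofReal ((Real.sqrt (1 - 2 * t * v))⁻¹ ^ d / Real.exp (t * η ^ 2)) := by
        rw [hint, hεdef, ENNReal.ofReal_div_of_pos (Real.exp_pos _)]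
    _ ≤ ENNReal.ofReal (Real.exp (-(η ^ 2) / (4 * v))) :=
        ENNReal.ofReal_le_ofReal
          (final_real_ineq d hd v η t r hv hη hrdef htdef hr)
end
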